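/- Validity of declarative Fω..: (1) if Γ ⊢ A : K then Γ ⊢ K kd; (2) if Γ ⊢ t : A then Γ ⊢ A : ∗; (3) if Γ ⊢ J ≤ K or Γ ⊢ J = K then Γ ⊢ J kd and Γ ⊢ K kd; (4) if Γ ⊢ A ≤ B : K or Γ ⊢ A = B : K then Γ ⊢ A : K and Γ ⊢ B : K. -/

import Mathlib

set_option autoImplicit true
set_option maxHeartbeats 1000000
set_option linter.unusedVariables false

/-- Shapes (simple kinds): `k ::= ∗ | k → k`. -/
inductive SKind : Type
  | star
  | arr (j k : SKind)
/-! ## Ordinary (direct) syntax of Fω.., de Bruijn representation.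
A single namespace of variables is used for both term and type variables;
contexts record which bindings are term bindings and which are type bindings. -/

mutual
/-- Types of Fω..: `A ::= X | ⊤ | ⊥ | A → B | ∀X:K.A | λX:K.A | A B`. -/
inductive Ty : Type
  | var (x : ℕ)
  | top
  | bot
  | arr (a b : Ty)
  | all (k : Kd) (a : Ty)
  | lam (k : Kd) (a : Ty)
  | app (a b : Ty)

/-- Kinds of Fω..: `K ::= A..B | (X:J)→K`. -/
inductive Kd : Type
  | intv (a b : Ty)
  | pi (j : Kd) (k : Kd)
end

/-- Terms of Fω..: `t ::= x | λx:A.t | s t | ΛX:K.t | t A`. -/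
inductive Tm : Type
  | var (x : ℕ)
  | lam (a : Ty) (t : Tm)
  | app (s t : Tm)
  | tlam (k : Kd) (t : Tm)
  | tapp (t : Tm) (a : Ty)

mutual
/-- Shift (weakening): increment all variables `≥ c` by one. -/
def Ty.shift (c : ℕ) : Ty → Ty
  | .var x => if x < c then .var x else .var (x + 1)
  | .top => .top
  | .bot => .bot
  | .arr a b => .arr (a.shift c) (b.shift c)
  | .all k a => .all (k.shift c) (a.shift (c + 1))
  | .lam k a => .lam (k.shift c) (a.shift (c + 1))
  | .app a b => .app (a.shift c) (b.shift c)

def Kd.shift (c : ℕ) : Kd → Kd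
  | .intv a b => .intv (a.shift c) (b.shift c)
  | .pi j k => .pi (j.shift c) (k.shift (c + 1))
end

mutual
/-- Capture-avoiding substitution of the type `v` for type variable `x` in a type. -/
def Ty.subst : Ty → ℕ → Ty → Ty
  | .var y, x, v => if y = x then v else if x < y then .var (y - 1) else .var y
  | .top, _, _ => .top
  | .bot, _, _ => .bot
  | .arr a b, x, v => .arr (a.subst x v) (b.subst x v)
  | .all k a, x, v => .all (k.subst x v) (a.subst (x + 1) (v.shift 0))
  | .lam k a, x, v => .lam (k.subst x v) (a.subst (x + 1) (v.shift 0))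
  | .app a b, x, v => .app (a.subst x v) (b.subst x v)

/-- Capture-avoiding substitution of the type `v` for type variable `x` in a kind. -/
def Kd.subst : Kd → ℕ → Ty → Kd
  | .intv a b, x, v => .intv (a.subst x v) (b.subst x v)
  | .pi j k, x, v => .pi (j.subst x v) (k.subst (x + 1) (v.shift 0))
end

/-- Shift on terms (single variable namespace: every binder shifts). -/
def Tm.shift (c : ℕ) : Tm → Tm
  | .var x => if x < c then .var x else .var (x + 1)
  | .lam a t => .lam (a.shift c) (t.shift (c + 1))
  | .app s t => .app (s.shift c) (t.shift c)
  | .tlam k t => .tlam (k.shift c) (t.shift (c + 1))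
  | .tapp t a => .tapp (t.shift c) (a.shift c)

/-- Capture-avoiding substitution of the type `v` for type variable `x` in a term. -/
def Tm.substTy : Tm → ℕ → Ty → Tm
  | .var y, x, _ => if x < y then .var (y - 1) else .var y
  | .lam a t, x, v => .lam (a.subst x v) (t.substTy (x + 1) (v.shift 0))
  | .app s t, x, v => .app (s.substTy x v) (t.substTy x v)
  | .tlam k t, x, v => .tlam (k.subst x v) (t.substTy (x + 1) (v.shift 0))
  | .tapp t a, x, v => .tapp (t.substTy x v) (a.subst x v)

mutual
/-- Strengthening used when substituting a *term* for a variable: type variables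
cannot be hit, only renumbered. -/
def Ty.strTm (x : ℕ) : Ty → Ty
  | .var y => if x < y then .var (y - 1) else .var y
  | .top => .top
  | .bot => .bot
  | .arr a b => .arr (a.strTm x) (b.strTm x)
  | .all k a => .all (k.strTm x) (a.strTm (x + 1))
  | .lam k a => .lam (k.strTm x) (a.strTm (x + 1))
  | .app a b => .app (a.strTm x) (b.strTm x)

def Kd.strTm (x : ℕ) : Kd → Kd
  | .intv a b => .intv (a.strTm x) (b.strTm x)
  | .pi j k => .pi (j.strTm x) (k.strTm (x + 1))
end

/-- Capture-avoiding substitution of the term `v` for term variable `x` in a term. -/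
def Tm.subst : Tm → ℕ → Tm → Tm
  | .var y, x, v => if y = x then v else if x < y then .var (y - 1) else .var y
  | .lam a t, x, v => .lam (a.strTm x) (t.subst (x + 1) (v.shift 0))
  | .app s t, x, v => .app (s.subst x v) (t.subst x v)
  | .tlam k t, x, v => .tlam (k.strTm x) (t.subst (x + 1) (v.shift 0))
  | .tapp t a, x, v => .tapp (t.subst x v) (a.strTm x)

/-- Shape (simple-kind) erasure of kinds: `|A..B| = ∗`, `|(X:J)→K| = |J| → |K|`. -/
def Kd.shape : Kd → SKind
  | .intv _ _ => .star
  | .pi j k => .arr j.shape k.shape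
/-! ## The declarative system of Fω.. -/

/-- Context bindings: type-variable bindings `X : K` and term-variable
bindings `x : A`. -/
inductive OBind : Type
  | ty (k : Kd)
  | tm (a : Ty)

/-- Typing contexts (innermost binding first, de Bruijn style). -/
abbrev Ctx := List OBind

/-- The kind `∗` of proper types: `∗ := ⊥..⊤`. -/
def Kd.star : Kd := .intv .bot .top

/-- Weakening by `n` innermost variables. -/
def Kd.weaken (n : ℕ) (k : Kd) : Kd := (Kd.shift 0)^[n] k

/-- Weakening by `n` innermost variables. -/
def Ty.weaken (n : ℕ) (a : Ty) : Ty := (Ty.shift 0)^[n] a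

mutual
/-- Context formation `Γ ctx`. -/
inductive CtxWf : Ctx → Prop
  | nil : CtxWf []
  | ty : CtxWf Γ → KdWf Γ K → CtxWf (.ty K :: Γ)
  | tm : CtxWf Γ → Kinding Γ A Kd.star → CtxWf (.tm A :: Γ)

/-- Kind formation `Γ ⊢ K kd`. -/
inductive KdWf : Ctx → Kd → Prop
  | intv : Kinding Γ A Kd.star → Kinding Γ B Kd.star → KdWf Γ (.intv A B)
  | pi : KdWf Γ J → KdWf (.ty J :: Γ) K → KdWf Γ (.pi J K)

/-- Kinding `Γ ⊢ A : K`. -/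
inductive Kinding : Ctx → Ty → Kd → Prop
  | var : CtxWf Γ → Γ[x]? = some (.ty K) → Kinding Γ (.var x) (K.weaken (x + 1))
  | top : CtxWf Γ → Kinding Γ .top Kd.star
  | bot : CtxWf Γ → Kinding Γ .bot Kd.star
  | arr : Kinding Γ A Kd.star → Kinding Γ B Kd.star → Kinding Γ (.arr A B) Kd.star
  | abs : KdWf Γ J → Kinding (.ty J :: Γ) A K → Kinding Γ (.lam J A) (.pi J K)
  | sing : Kinding Γ A (.intv B C) → Kinding Γ A (.intv A A)
  | all : KdWf Γ K → Kinding (.ty K :: Γ) A Kd.star → Kinding Γ (.all K A) Kd.star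
  | app : Kinding Γ A (.pi J K) → Kinding Γ B J → Kinding Γ (.app A B) (K.subst 0 B)
  | sub : Kinding Γ A J → SubKd Γ J K → Kinding Γ A K

/-- Typing `Γ ⊢ t : A`. -/
inductive Typing : Ctx → Tm → Ty → Prop
  | var : CtxWf Γ → Γ[x]? = some (.tm A) → Typing Γ (.var x) (A.weaken (x + 1))
  | abs : Kinding Γ A Kd.star → Kinding Γ B Kd.star →
      Typing (.tm A :: Γ) t (B.shift 0) → Typing Γ (.lam A t) (.arr A B)
  | app : Typing Γ s (.arr A B) → Typing Γ t A → Typing Γ (.app s t) B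
  | tabs : KdWf Γ K → Typing (.ty K :: Γ) t A → Typing Γ (.tlam K t) (.all K A)
  | tapp : Typing Γ t (.all K A) → Kinding Γ B K → Typing Γ (.tapp t B) (A.subst 0 B)
  | sub : Typing Γ t A → SubTy Γ A B Kd.star → Typing Γ t B

/-- Subkinding `Γ ⊢ J ≤ K`. -/
inductive SubKd : Ctx → Kd → Kd → Prop
  | intv : SubTy Γ A₂ A₁ Kd.star → SubTy Γ B₁ B₂ Kd.star →
      SubKd Γ (.intv A₁ B₁) (.intv A₂ B₂)
  | pi : KdWf Γ (.pi J₁ K₁) → SubKd Γ J₂ J₁ → SubKd (.ty J₂ :: Γ) K₁ K₂ →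
      SubKd Γ (.pi J₁ K₁) (.pi J₂ K₂)

/-- Subtyping `Γ ⊢ A ≤ B : K`. -/
inductive SubTy : Ctx → Ty → Ty → Kd → Prop
  | refl : Kinding Γ A K → SubTy Γ A A K
  | trans : SubTy Γ A B K → SubTy Γ B C K → SubTy Γ A C K
  | top : Kinding Γ A (.intv B C) → SubTy Γ A .top Kd.star
  | bot : Kinding Γ A (.intv B C) → SubTy Γ .bot A Kd.star
  | beta₁ : Kinding (.ty J :: Γ) A K → Kinding Γ B J →
      SubTy Γ (.app (.lam J A) B) (A.subst 0 B) (K.subst 0 B)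
  | beta₂ : Kinding (.ty J :: Γ) A K → Kinding Γ B J →
      SubTy Γ (A.subst 0 B) (.app (.lam J A) B) (K.subst 0 B)
  | eta₁ : Kinding Γ A (.pi J K) →
      SubTy Γ (.lam J (.app (A.shift 0) (.var 0))) A (.pi J K)
  | eta₂ : Kinding Γ A (.pi J K) →
      SubTy Γ A (.lam J (.app (A.shift 0) (.var 0))) (.pi J K)
  | arr : SubTy Γ A₂ A₁ Kd.star → SubTy Γ B₁ B₂ Kd.star →
      SubTy Γ (.arr A₁ B₁) (.arr A₂ B₂) Kd.star
  | abs : Kinding Γ (.lam J₁ A₁) (.pi J K) → Kinding Γ (.lam J₂ A₂) (.pi J K) →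
      SubTy (.ty J :: Γ) A₁ A₂ K → SubTy Γ (.lam J₁ A₁) (.lam J₂ A₂) (.pi J K)
  | all : Kinding Γ (.all K₁ A₁) Kd.star → SubKd Γ K₂ K₁ →
      SubTy (.ty K₂ :: Γ) A₁ A₂ Kd.star →
      SubTy Γ (.all K₁ A₁) (.all K₂ A₂) Kd.star
  | app : SubTy Γ A₁ A₂ (.pi J K) → TyEq Γ B₁ B₂ J →
      SubTy Γ (.app A₁ B₁) (.app A₂ B₂) (K.subst 0 B₁)
  | bnd₁ : Kinding Γ A (.intv B₁ B₂) → SubTy Γ B₁ A Kd.star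
  | bnd₂ : Kinding Γ A (.intv B₁ B₂) → SubTy Γ A B₂ Kd.star
  | intv : SubTy Γ A₁ A₂ (.intv B C) → SubTy Γ A₁ A₂ (.intv A₁ A₂)
  | sub : SubTy Γ A₁ A₂ J → SubKd Γ J K → SubTy Γ A₁ A₂ K

/-- Kind equality `Γ ⊢ J = K`, defined by antisymmetry of subkinding. -/
inductive KdEq : Ctx → Kd → Kd → Prop
  | antisym : SubKd Γ J K → SubKd Γ K J → KdEq Γ J K

/-- Type equality `Γ ⊢ A = B : K`, defined by antisymmetry of subtyping. -/
inductive TyEq : Ctx → Ty → Ty → Kd → Prop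
  | antisym : SubTy Γ A B K → SubTy Γ B A K → TyEq Γ A B K
end

/-! ### Parallel renaming and substitution (sigma calculus) -/

abbrev Ren : Type := ℕ → ℕ

def Ren.lift (r : Ren) : Ren := fun i => match i with
  | 0 => 0
  | i + 1 => r i + 1

mutual
def Ty.rn : Ty → Ren → Ty
  | .var x, r => .var (r x)
  | .top, _ => .top
  | .bot, _ => .bot
  | .arr a b, r => .arr (a.rn r) (b.rn r)
  | .all k a, r => .all (k.rn r) (a.rn r.lift)
  | .lam k a, r => .lam (k.rn r) (a.rn r.lift)
  | .app a b, r => .app (a.rn r) (b.rn r)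
def Kd.rn : Kd → Ren → Kd
  | .intv a b, r => .intv (a.rn r) (b.rn r)
  | .pi j k, r => .pi (j.rn r) (k.rn r.lift)
end

abbrev Sb : Type := ℕ → Ty

def Sb.lift (σ : Sb) : Sb := fun i => match i with
  | 0 => .var 0
  | i + 1 => (σ i).rn Nat.succ

mutual
def Ty.asub : Ty → Sb → Ty
  | .var x, σ => σ x
  | .top, _ => .top
  | .bot, _ => .bot
  | .arr a b, σ => .arr (a.asub σ) (b.asub σ)
  | .all k a, σ => .all (k.asub σ) (a.asub σ.lift)
  | .lam k a, σ => .lam (k.asub σ) (a.asub σ.lift)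
  | .app a b, σ => .app (a.asub σ) (b.asub σ)
def Kd.asub : Kd → Sb → Kd
  | .intv a b, σ => .intv (a.asub σ) (b.asub σ)
  | .pi j k, σ => .pi (j.asub σ) (k.asub σ.lift)
end

theorem Ren.lift_comp (r s : Ren) : (Ren.lift s) ∘ (Ren.lift r) = Ren.lift (fun i => s (r i)) := by
  funext i; cases i <;> rfl

mutual
theorem Ty.rn_rn : ∀ (A : Ty) (r s : Ren), (A.rn r).rn s = A.rn (fun i => s (r i))
  | .var x, _, _ => rfl
  | .top, _, _ => rfl
  | .bot, _, _ => rfl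
  | .arr a b, r, s => by simp only [Ty.rn, Ty.rn_rn a, Ty.rn_rn b]
  | .all k a, r, s => by
      simp only [Ty.rn, Kd.rn_rn k, Ty.rn_rn a]
      rw [show (fun i => s.lift (r.lift i)) = Ren.lift (fun i => s (r i)) from funext fun i => congrFun (Ren.lift_comp r s) i]
  | .lam k a, r, s => by
      simp only [Ty.rn, Kd.rn_rn k, Ty.rn_rn a]
      rw [show (fun i => s.lift (r.lift i)) = Ren.lift (fun i => s (r i)) from funext fun i => congrFun (Ren.lift_comp r s) i]
  | .app a b, r, s => by simp only [Ty.rn, Ty.rn_rn a, Ty.rn_rn b]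
theorem Kd.rn_rn : ∀ (K : Kd) (r s : Ren), (K.rn r).rn s = K.rn (fun i => s (r i))
  | .intv a b, r, s => by simp only [Kd.rn, Ty.rn_rn a, Ty.rn_rn b]
  | .pi j k, r, s => by
      simp only [Kd.rn, Kd.rn_rn j, Kd.rn_rn k]
      rw [show (fun i => s.lift (r.lift i)) = Ren.lift (fun i => s (r i)) from funext fun i => congrFun (Ren.lift_comp r s) i]
end

theorem Sb.lift_rn (r : Ren) (σ : Sb) :
    (fun i => Sb.lift σ (Ren.lift r i)) = Sb.lift (fun i => σ (r i)) := by
  funext i; cases i <;> rfl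

mutual
theorem Ty.rn_asub : ∀ (A : Ty) (r : Ren) (σ : Sb), (A.rn r).asub σ = A.asub (fun i => σ (r i))
  | .var x, _, _ => rfl
  | .top, _, _ => rfl
  | .bot, _, _ => rfl
  | .arr a b, r, σ => by simp only [Ty.rn, Ty.asub, Ty.rn_asub a, Ty.rn_asub b]
  | .all k a, r, σ => by
      simp only [Ty.rn, Ty.asub, Kd.rn_asub k, Ty.rn_asub a, Sb.lift_rn]
  | .lam k a, r, σ => by
      simp only [Ty.rn, Ty.asub, Kd.rn_asub k, Ty.rn_asub a, Sb.lift_rn]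
  | .app a b, r, σ => by simp only [Ty.rn, Ty.asub, Ty.rn_asub a, Ty.rn_asub b]
theorem Kd.rn_asub : ∀ (K : Kd) (r : Ren) (σ : Sb), (K.rn r).asub σ = K.asub (fun i => σ (r i))
  | .intv a b, r, σ => by simp only [Kd.rn, Kd.asub, Ty.rn_asub a, Ty.rn_asub b]
  | .pi j k, r, σ => by
      simp only [Kd.rn, Kd.asub, Kd.rn_asub j, Kd.rn_asub k, Sb.lift_rn]
end

theorem Sb.rn_lift (σ : Sb) (r : Ren) :
    (fun i => (Sb.lift σ i).rn (Ren.lift r)) = Sb.lift (fun i => (σ i).rn r) := by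
  funext i
  cases i with
  | zero => rfl
  | succ i =>
      show ((σ i).rn Nat.succ).rn (Ren.lift r) = ((σ i).rn r).rn Nat.succ
      rw [Ty.rn_rn, Ty.rn_rn]; congr 1

mutual
theorem Ty.asub_rn : ∀ (A : Ty) (σ : Sb) (r : Ren), (A.asub σ).rn r = A.asub (fun i => (σ i).rn r)
  | .var x, _, _ => rfl
  | .top, _, _ => rfl
  | .bot, _, _ => rfl
  | .arr a b, σ, r => by simp only [Ty.rn, Ty.asub, Ty.asub_rn a, Ty.asub_rn b]
  | .all k a, σ, r => by
      simp only [Ty.rn, Ty.asub, Kd.asub_rn k, Ty.asub_rn a, Sb.rn_lift]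
  | .lam k a, σ, r => by
      simp only [Ty.rn, Ty.asub, Kd.asub_rn k, Ty.asub_rn a, Sb.rn_lift]
  | .app a b, σ, r => by simp only [Ty.rn, Ty.asub, Ty.asub_rn a, Ty.asub_rn b]
theorem Kd.asub_rn : ∀ (K : Kd) (σ : Sb) (r : Ren), (K.asub σ).rn r = K.asub (fun i => (σ i).rn r)
  | .intv a b, σ, r => by simp only [Kd.rn, Kd.asub, Ty.asub_rn a, Ty.asub_rn b]
  | .pi j k, σ, r => by
      simp only [Kd.rn, Kd.asub, Kd.asub_rn j, Kd.asub_rn k, Sb.rn_lift]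
end

theorem Sb.lift_lift (σ τ : Sb) :
    (fun i => (Sb.lift σ i).asub (Sb.lift τ)) = Sb.lift (fun i => (σ i).asub τ) := by
  funext i
  cases i with
  | zero => rfl
  | succ i =>
      show ((σ i).rn Nat.succ).asub (Sb.lift τ) = ((σ i).asub τ).rn Nat.succ
      rw [Ty.rn_asub, Ty.asub_rn]; rfl

mutual
theorem Ty.asub_asub : ∀ (A : Ty) (σ τ : Sb), (A.asub σ).asub τ = A.asub (fun i => (σ i).asub τ)
  | .var x, _, _ => rfl
  | .top, _, _ => rfl
  | .bot, _, _ => rfl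
  | .arr a b, σ, τ => by simp only [Ty.asub, Ty.asub_asub a, Ty.asub_asub b]
  | .all k a, σ, τ => by
      simp only [Ty.asub, Kd.asub_asub k, Ty.asub_asub a, Sb.lift_lift]
  | .lam k a, σ, τ => by
      simp only [Ty.asub, Kd.asub_asub k, Ty.asub_asub a, Sb.lift_lift]
  | .app a b, σ, τ => by simp only [Ty.asub, Ty.asub_asub a, Ty.asub_asub b]
theorem Kd.asub_asub : ∀ (K : Kd) (σ τ : Sb), (K.asub σ).asub τ = K.asub (fun i => (σ i).asub τ)
  | .intv a b, σ, τ => by simp only [Kd.asub, Ty.asub_asub a, Ty.asub_asub b]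
  | .pi j k, σ, τ => by
      simp only [Kd.asub, Kd.asub_asub j, Kd.asub_asub k, Sb.lift_lift]
end

theorem Sb.lift_var : Sb.lift Ty.var = Ty.var := by
  funext i; cases i <;> rfl

mutual
theorem Ty.asub_var : ∀ (A : Ty), A.asub Ty.var = A
  | .var x => rfl
  | .top => rfl
  | .bot => rfl
  | .arr a b => by simp only [Ty.asub, Ty.asub_var a, Ty.asub_var b]
  | .all k a => by simp only [Ty.asub, Sb.lift_var, Kd.asub_var k, Ty.asub_var a]
  | .lam k a => by simp only [Ty.asub, Sb.lift_var, Kd.asub_var k, Ty.asub_var a]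
  | .app a b => by simp only [Ty.asub, Ty.asub_var a, Ty.asub_var b]
theorem Kd.asub_var : ∀ (K : Kd), K.asub Ty.var = K
  | .intv a b => by simp only [Kd.asub, Ty.asub_var a, Ty.asub_var b]
  | .pi j k => by simp only [Kd.asub, Sb.lift_var, Kd.asub_var j, Kd.asub_var k]
end

/-- The renaming underlying `shift c`. -/
def rsh (c : ℕ) : Ren := fun i => if i < c then i else i + 1

theorem rsh_lift (c : ℕ) : Ren.lift (rsh c) = rsh (c + 1) := by
  funext i; cases i with
  | zero => simp [Ren.lift, rsh]
  | succ i => simp only [Ren.lift, rsh]; split <;> split <;> first | rfl | omega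

mutual
theorem Ty.shift_eq : ∀ (A : Ty) (c : ℕ), A.shift c = A.rn (rsh c)
  | .var x, c => by simp only [Ty.shift, Ty.rn, rsh]; split <;> rfl
  | .top, _ => rfl
  | .bot, _ => rfl
  | .arr a b, c => by simp only [Ty.shift, Ty.rn, Ty.shift_eq a, Ty.shift_eq b]
  | .all k a, c => by simp only [Ty.shift, Ty.rn, Kd.shift_eq k, Ty.shift_eq a, rsh_lift]
  | .lam k a, c => by simp only [Ty.shift, Ty.rn, Kd.shift_eq k, Ty.shift_eq a, rsh_lift]
  | .app a b, c => by simp only [Ty.shift, Ty.rn, Ty.shift_eq a, Ty.shift_eq b]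
theorem Kd.shift_eq : ∀ (K : Kd) (c : ℕ), K.shift c = K.rn (rsh c)
  | .intv a b, c => by simp only [Kd.shift, Kd.rn, Ty.shift_eq a, Ty.shift_eq b]
  | .pi j k, c => by simp only [Kd.shift, Kd.rn, Kd.shift_eq j, Kd.shift_eq k, rsh_lift]
end

/-- The substitution underlying `subst x v`. -/
def sbs (x : ℕ) (v : Ty) : Sb := fun i =>
  if i = x then v else if x < i then .var (i - 1) else .var i

theorem sbs_lift (x : ℕ) (v : Ty) : Sb.lift (sbs x v) = sbs (x + 1) (v.rn Nat.succ) := by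
  funext i; cases i with
  | zero => simp [Sb.lift, sbs]
  | succ i =>
      simp only [Sb.lift, sbs]
      by_cases h : i = x
      · simp [h]
      · simp only [h, if_false, show ¬(i + 1 = x + 1) from by omega]
        by_cases h2 : x < i
        · simp only [h2, if_true, show x + 1 < i + 1 from by omega, if_true, Ty.rn]
          congr 1; omega
        · simp only [h2, if_false, show ¬(x + 1 < i + 1) from by omega, if_false, Ty.rn]

theorem Ty.shift0_rn (v : Ty) : v.shift 0 = v.rn Nat.succ := by
  rw [Ty.shift_eq]; congr 1

mutual
theorem Ty.subst_eq : ∀ (A : Ty) (x : ℕ) (v : Ty), A.subst x v = A.asub (sbs x v)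
  | .var y, x, v => by
      simp only [Ty.subst, Ty.asub, sbs]
  | .top, _, _ => rfl
  | .bot, _, _ => rfl
  | .arr a b, x, v => by simp only [Ty.subst, Ty.asub, Ty.subst_eq a, Ty.subst_eq b]
  | .all k a, x, v => by
      simp only [Ty.subst, Ty.asub, Kd.subst_eq k, Ty.subst_eq a, sbs_lift, Ty.shift0_rn]
  | .lam k a, x, v => by
      simp only [Ty.subst, Ty.asub, Kd.subst_eq k, Ty.subst_eq a, sbs_lift, Ty.shift0_rn]
  | .app a b, x, v => by simp only [Ty.subst, Ty.asub, Ty.subst_eq a, Ty.subst_eq b]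
theorem Kd.subst_eq : ∀ (K : Kd) (x : ℕ) (v : Ty), K.subst x v = K.asub (sbs x v)
  | .intv a b, x, v => by simp only [Kd.subst, Kd.asub, Ty.subst_eq a, Ty.subst_eq b]
  | .pi j k, x, v => by
      simp only [Kd.subst, Kd.asub, Kd.subst_eq j, Kd.subst_eq k, sbs_lift, Ty.shift0_rn]
end

theorem Ty.rn_eq_asub (A : Ty) (r : Ren) : A.rn r = A.asub (fun i => Ty.var (r i)) := by
  rw [← Ty.asub_var (A.rn r), Ty.rn_asub]

theorem Kd.rn_eq_asub (K : Kd) (r : Ren) : K.rn r = K.asub (fun i => Ty.var (r i)) := by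
  rw [← Kd.asub_var (K.rn r), Kd.rn_asub]

theorem Ty.weaken_eq (A : Ty) : ∀ (n : ℕ), A.weaken n = A.rn (· + n)
  | 0 => by
      show A = _
      rw [Ty.rn_eq_asub, show (fun i => Ty.var (i + 0)) = Ty.var from funext fun i => rfl,
        Ty.asub_var]
  | n + 1 => by
      show (Ty.shift 0)^[n+1] A = _
      rw [Function.iterate_succ_apply', show (Ty.shift 0)^[n] A = A.weaken n from rfl,
        Ty.weaken_eq A n, Ty.shift0_rn, Ty.rn_rn]
      congr 1

theorem Kd.weaken_eq (K : Kd) : ∀ (n : ℕ), K.weaken n = K.rn (· + n)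
  | 0 => by
      show K = _
      rw [Kd.rn_eq_asub, show (fun i => Ty.var (i + 0)) = Ty.var from funext fun i => rfl,
        Kd.asub_var]
  | n + 1 => by
      show (Kd.shift 0)^[n+1] K = _
      rw [Function.iterate_succ_apply', show (Kd.shift 0)^[n] K = K.weaken n from rfl,
        Kd.weaken_eq K n, Kd.shift_eq, Kd.rn_rn]
      rw [Kd.rn_eq_asub, Kd.rn_eq_asub]
      congr 1

/-- cons for substitutions -/
def scons (b : Ty) (σ : Sb) : Sb := fun i => match i with
  | 0 => b
  | i + 1 => σ i

/-! ### A reusable simultaneous-induction principle for the mutual judgments -/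

theorem allRec {M1 : Ctx → Prop} {M2 : Ctx → Kd → Prop} {M3 : Ctx → Ty → Kd → Prop}
    {M4 : Ctx → Tm → Ty → Prop} {M5 : Ctx → Kd → Kd → Prop} {M6 : Ctx → Ty → Ty → Kd → Prop}
    {M7 : Ctx → Kd → Kd → Prop} {M8 : Ctx → Ty → Ty → Kd → Prop}
    (nil : M1 [])
    (cty : ∀ {Γ : Ctx} {K : Kd}, CtxWf Γ → KdWf Γ K → M1 Γ → M2 Γ K → M1 (.ty K :: Γ))
    (ctm : ∀ {Γ : Ctx} {A : Ty}, CtxWf Γ → Kinding Γ A Kd.star → M1 Γ → M3 Γ A Kd.star → M1 (.tm A :: Γ))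
    (kintv : ∀ {Γ : Ctx} {A B : Ty}, Kinding Γ A Kd.star → Kinding Γ B Kd.star → M3 Γ A Kd.star → M3 Γ B Kd.star → M2 Γ (.intv A B))
    (kpi : ∀ {Γ : Ctx} {J K : Kd}, KdWf Γ J → KdWf (.ty J :: Γ) K → M2 Γ J → M2 (.ty J :: Γ) K → M2 Γ (.pi J K))
    (kvar : ∀ {Γ : Ctx} {x : ℕ} {K : Kd}, CtxWf Γ → Γ[x]? = some (.ty K) → M1 Γ → M3 Γ (.var x) (K.weaken (x+1)))
    (ktop : ∀ {Γ : Ctx}, CtxWf Γ → M1 Γ → M3 Γ .top Kd.star)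
    (kbot : ∀ {Γ : Ctx}, CtxWf Γ → M1 Γ → M3 Γ .bot Kd.star)
    (karr : ∀ {Γ : Ctx} {A B : Ty}, Kinding Γ A Kd.star → Kinding Γ B Kd.star → M3 Γ A Kd.star → M3 Γ B Kd.star → M3 Γ (.arr A B) Kd.star)
    (kabs : ∀ {Γ : Ctx} {J : Kd} {A : Ty} {K : Kd}, KdWf Γ J → Kinding (.ty J :: Γ) A K → M2 Γ J → M3 (.ty J :: Γ) A K → M3 Γ (.lam J A) (.pi J K))
    (ksing : ∀ {Γ : Ctx} {A B C : Ty}, Kinding Γ A (.intv B C) → M3 Γ A (.intv B C) → M3 Γ A (.intv A A))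
    (kall : ∀ {Γ : Ctx} {K : Kd} {A : Ty}, KdWf Γ K → Kinding (.ty K :: Γ) A Kd.star → M2 Γ K → M3 (.ty K :: Γ) A Kd.star → M3 Γ (.all K A) Kd.star)
    (kapp : ∀ {Γ : Ctx} {A : Ty} {J K : Kd} {B : Ty}, Kinding Γ A (.pi J K) → Kinding Γ B J → M3 Γ A (.pi J K) → M3 Γ B J → M3 Γ (.app A B) (K.subst 0 B))
    (ksub : ∀ {Γ : Ctx} {A : Ty} {J K : Kd}, Kinding Γ A J → SubKd Γ J K → M3 Γ A J → M5 Γ J K → M3 Γ A K)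
    (tvar : ∀ {Γ : Ctx} {x : ℕ} {A : Ty}, CtxWf Γ → Γ[x]? = some (.tm A) → M1 Γ → M4 Γ (.var x) (A.weaken (x+1)))
    (tabs : ∀ {Γ : Ctx} {A B : Ty} {t : Tm}, Kinding Γ A Kd.star → Kinding Γ B Kd.star → Typing (.tm A :: Γ) t (B.shift 0) → M3 Γ A Kd.star → M3 Γ B Kd.star → M4 (.tm A :: Γ) t (B.shift 0) → M4 Γ (.lam A t) (.arr A B))
    (tapp : ∀ {Γ : Ctx} {s : Tm} {A B : Ty} {t : Tm}, Typing Γ s (.arr A B) → Typing Γ t A → M4 Γ s (.arr A B) → M4 Γ t A → M4 Γ (.app s t) B)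
    (ttabs : ∀ {Γ : Ctx} {K : Kd} {t : Tm} {A : Ty}, KdWf Γ K → Typing (.ty K :: Γ) t A → M2 Γ K → M4 (.ty K :: Γ) t A → M4 Γ (.tlam K t) (.all K A))
    (ttapp : ∀ {Γ : Ctx} {t : Tm} {K : Kd} {A B : Ty}, Typing Γ t (.all K A) → Kinding Γ B K → M4 Γ t (.all K A) → M3 Γ B K → M4 Γ (.tapp t B) (A.subst 0 B))
    (tsub : ∀ {Γ : Ctx} {t : Tm} {A B : Ty}, Typing Γ t A → SubTy Γ A B Kd.star → M4 Γ t A → M6 Γ A B Kd.star → M4 Γ t B)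
    (skintv : ∀ {Γ : Ctx} {A₂ A₁ B₁ B₂ : Ty}, SubTy Γ A₂ A₁ Kd.star → SubTy Γ B₁ B₂ Kd.star → M6 Γ A₂ A₁ Kd.star → M6 Γ B₁ B₂ Kd.star → M5 Γ (.intv A₁ B₁) (.intv A₂ B₂))
    (skpi : ∀ {Γ : Ctx} {J₁ K₁ J₂ K₂ : Kd}, KdWf Γ (.pi J₁ K₁) → SubKd Γ J₂ J₁ → SubKd (.ty J₂ :: Γ) K₁ K₂ → M2 Γ (.pi J₁ K₁) → M5 Γ J₂ J₁ → M5 (.ty J₂ :: Γ) K₁ K₂ → M5 Γ (.pi J₁ K₁) (.pi J₂ K₂))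
    (strefl : ∀ {Γ : Ctx} {A : Ty} {K : Kd}, Kinding Γ A K → M3 Γ A K → M6 Γ A A K)
    (sttrans : ∀ {Γ : Ctx} {A B : Ty} {K : Kd} {C : Ty}, SubTy Γ A B K → SubTy Γ B C K → M6 Γ A B K → M6 Γ B C K → M6 Γ A C K)
    (sttop : ∀ {Γ : Ctx} {A B C : Ty}, Kinding Γ A (.intv B C) → M3 Γ A (.intv B C) → M6 Γ A .top Kd.star)
    (stbot : ∀ {Γ : Ctx} {A B C : Ty}, Kinding Γ A (.intv B C) → M3 Γ A (.intv B C) → M6 Γ .bot A Kd.star)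
    (stbeta1 : ∀ {J : Kd} {Γ : Ctx} {A : Ty} {K : Kd} {B : Ty}, Kinding (.ty J :: Γ) A K → Kinding Γ B J → M3 (.ty J :: Γ) A K → M3 Γ B J → M6 Γ (.app (.lam J A) B) (A.subst 0 B) (K.subst 0 B))
    (stbeta2 : ∀ {J : Kd} {Γ : Ctx} {A : Ty} {K : Kd} {B : Ty}, Kinding (.ty J :: Γ) A K → Kinding Γ B J → M3 (.ty J :: Γ) A K → M3 Γ B J → M6 Γ (A.subst 0 B) (.app (.lam J A) B) (K.subst 0 B))
    (steta1 : ∀ {Γ : Ctx} {A : Ty} {J K : Kd}, Kinding Γ A (.pi J K) → M3 Γ A (.pi J K) → M6 Γ (.lam J (.app (A.shift 0) (.var 0))) A (.pi J K))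
    (steta2 : ∀ {Γ : Ctx} {A : Ty} {J K : Kd}, Kinding Γ A (.pi J K) → M3 Γ A (.pi J K) → M6 Γ A (.lam J (.app (A.shift 0) (.var 0))) (.pi J K))
    (starr : ∀ {Γ : Ctx} {A₂ A₁ B₁ B₂ : Ty}, SubTy Γ A₂ A₁ Kd.star → SubTy Γ B₁ B₂ Kd.star → M6 Γ A₂ A₁ Kd.star → M6 Γ B₁ B₂ Kd.star → M6 Γ (.arr A₁ B₁) (.arr A₂ B₂) Kd.star)
    (stabs : ∀ {Γ : Ctx} {J₁ : Kd} {A₁ : Ty} {J K J₂ : Kd} {A₂ : Ty}, Kinding Γ (.lam J₁ A₁) (.pi J K) → Kinding Γ (.lam J₂ A₂) (.pi J K) → SubTy (.ty J :: Γ) A₁ A₂ K → M3 Γ (.lam J₁ A₁) (.pi J K) → M3 Γ (.lam J₂ A₂) (.pi J K) → M6 (.ty J :: Γ) A₁ A₂ K → M6 Γ (.lam J₁ A₁) (.lam J₂ A₂) (.pi J K))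
    (stall : ∀ {Γ : Ctx} {K₁ : Kd} {A₁ : Ty} {K₂ : Kd} {A₂ : Ty}, Kinding Γ (.all K₁ A₁) Kd.star → SubKd Γ K₂ K₁ → SubTy (.ty K₂ :: Γ) A₁ A₂ Kd.star → M3 Γ (.all K₁ A₁) Kd.star → M5 Γ K₂ K₁ → M6 (.ty K₂ :: Γ) A₁ A₂ Kd.star → M6 Γ (.all K₁ A₁) (.all K₂ A₂) Kd.star)
    (stapp : ∀ {Γ : Ctx} {A₁ A₂ : Ty} {J K : Kd} {B₁ B₂ : Ty}, SubTy Γ A₁ A₂ (.pi J K) → TyEq Γ B₁ B₂ J → M6 Γ A₁ A₂ (.pi J K) → M8 Γ B₁ B₂ J → M6 Γ (.app A₁ B₁) (.app A₂ B₂) (K.subst 0 B₁))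
    (stbnd1 : ∀ {Γ : Ctx} {A B₁ B₂ : Ty}, Kinding Γ A (.intv B₁ B₂) → M3 Γ A (.intv B₁ B₂) → M6 Γ B₁ A Kd.star)
    (stbnd2 : ∀ {Γ : Ctx} {A B₁ B₂ : Ty}, Kinding Γ A (.intv B₁ B₂) → M3 Γ A (.intv B₁ B₂) → M6 Γ A B₂ Kd.star)
    (stintv : ∀ {Γ : Ctx} {A₁ A₂ B C : Ty}, SubTy Γ A₁ A₂ (.intv B C) → M6 Γ A₁ A₂ (.intv B C) → M6 Γ A₁ A₂ (.intv A₁ A₂))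
    (stsub : ∀ {Γ : Ctx} {A₁ A₂ : Ty} {J K : Kd}, SubTy Γ A₁ A₂ J → SubKd Γ J K → M6 Γ A₁ A₂ J → M5 Γ J K → M6 Γ A₁ A₂ K)
    (keanti : ∀ {Γ : Ctx} {J K : Kd}, SubKd Γ J K → SubKd Γ K J → M5 Γ J K → M5 Γ K J → M7 Γ J K)
    (teanti : ∀ {Γ : Ctx} {A B : Ty} {K : Kd}, SubTy Γ A B K → SubTy Γ B A K → M6 Γ A B K → M6 Γ B A K → M8 Γ A B K) :
    (∀ {Γ}, CtxWf Γ → M1 Γ) ∧ (∀ {Γ K}, KdWf Γ K → M2 Γ K) ∧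
    (∀ {Γ A K}, Kinding Γ A K → M3 Γ A K) ∧ (∀ {Γ t A}, Typing Γ t A → M4 Γ t A) ∧
    (∀ {Γ J K}, SubKd Γ J K → M5 Γ J K) ∧ (∀ {Γ A B K}, SubTy Γ A B K → M6 Γ A B K) ∧
    (∀ {Γ J K}, KdEq Γ J K → M7 Γ J K) ∧ (∀ {Γ A B K}, TyEq Γ A B K → M8 Γ A B K) :=
  ⟨fun h => @CtxWf.rec (fun Γ _ => M1 Γ) (fun Γ K _ => M2 Γ K) (fun Γ A K _ => M3 Γ A K) (fun Γ t A _ => M4 Γ t A) (fun Γ J K _ => M5 Γ J K) (fun Γ A B K _ => M6 Γ A B K) (fun Γ J K _ => M7 Γ J K) (fun Γ A B K _ => M8 Γ A B K) nil cty ctm kintv kpi kvar ktop kbot karr kabs ksing kall kapp ksub tvar tabs tapp ttabs ttapp tsub skintv skpi strefl sttrans sttop stbot stbeta1 stbeta2 steta1 steta2 starr stabs stall stapp stbnd1 stbnd2 stintv stsub keanti teanti _ h,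
   fun h => @KdWf.rec (fun Γ _ => M1 Γ) (fun Γ K _ => M2 Γ K) (fun Γ A K _ => M3 Γ A K) (fun Γ t A _ => M4 Γ t A) (fun Γ J K _ => M5 Γ J K) (fun Γ A B K _ => M6 Γ A B K) (fun Γ J K _ => M7 Γ J K) (fun Γ A B K _ => M8 Γ A B K) nil cty ctm kintv kpi kvar ktop kbot karr kabs ksing kall kapp ksub tvar tabs tapp ttabs ttapp tsub skintv skpi strefl sttrans sttop stbot stbeta1 stbeta2 steta1 steta2 starr stabs stall stapp stbnd1 stbnd2 stintv stsub keanti teanti _ _ h,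
   fun h => @Kinding.rec (fun Γ _ => M1 Γ) (fun Γ K _ => M2 Γ K) (fun Γ A K _ => M3 Γ A K) (fun Γ t A _ => M4 Γ t A) (fun Γ J K _ => M5 Γ J K) (fun Γ A B K _ => M6 Γ A B K) (fun Γ J K _ => M7 Γ J K) (fun Γ A B K _ => M8 Γ A B K) nil cty ctm kintv kpi kvar ktop kbot karr kabs ksing kall kapp ksub tvar tabs tapp ttabs ttapp tsub skintv skpi strefl sttrans sttop stbot stbeta1 stbeta2 steta1 steta2 starr stabs stall stapp stbnd1 stbnd2 stintv stsub keanti teanti _ _ _ h,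
   fun h => @Typing.rec (fun Γ _ => M1 Γ) (fun Γ K _ => M2 Γ K) (fun Γ A K _ => M3 Γ A K) (fun Γ t A _ => M4 Γ t A) (fun Γ J K _ => M5 Γ J K) (fun Γ A B K _ => M6 Γ A B K) (fun Γ J K _ => M7 Γ J K) (fun Γ A B K _ => M8 Γ A B K) nil cty ctm kintv kpi kvar ktop kbot karr kabs ksing kall kapp ksub tvar tabs tapp ttabs ttapp tsub skintv skpi strefl sttrans sttop stbot stbeta1 stbeta2 steta1 steta2 starr stabs stall stapp stbnd1 stbnd2 stintv stsub keanti teanti _ _ _ h,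
   fun h => @SubKd.rec (fun Γ _ => M1 Γ) (fun Γ K _ => M2 Γ K) (fun Γ A K _ => M3 Γ A K) (fun Γ t A _ => M4 Γ t A) (fun Γ J K _ => M5 Γ J K) (fun Γ A B K _ => M6 Γ A B K) (fun Γ J K _ => M7 Γ J K) (fun Γ A B K _ => M8 Γ A B K) nil cty ctm kintv kpi kvar ktop kbot karr kabs ksing kall kapp ksub tvar tabs tapp ttabs ttapp tsub skintv skpi strefl sttrans sttop stbot stbeta1 stbeta2 steta1 steta2 starr stabs stall stapp stbnd1 stbnd2 stintv stsub keanti teanti _ _ _ h,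
   fun h => @SubTy.rec (fun Γ _ => M1 Γ) (fun Γ K _ => M2 Γ K) (fun Γ A K _ => M3 Γ A K) (fun Γ t A _ => M4 Γ t A) (fun Γ J K _ => M5 Γ J K) (fun Γ A B K _ => M6 Γ A B K) (fun Γ J K _ => M7 Γ J K) (fun Γ A B K _ => M8 Γ A B K) nil cty ctm kintv kpi kvar ktop kbot karr kabs ksing kall kapp ksub tvar tabs tapp ttabs ttapp tsub skintv skpi strefl sttrans sttop stbot stbeta1 stbeta2 steta1 steta2 starr stabs stall stapp stbnd1 stbnd2 stintv stsub keanti teanti _ _ _ _ h,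
   fun h => @KdEq.rec (fun Γ _ => M1 Γ) (fun Γ K _ => M2 Γ K) (fun Γ A K _ => M3 Γ A K) (fun Γ t A _ => M4 Γ t A) (fun Γ J K _ => M5 Γ J K) (fun Γ A B K _ => M6 Γ A B K) (fun Γ J K _ => M7 Γ J K) (fun Γ A B K _ => M8 Γ A B K) nil cty ctm kintv kpi kvar ktop kbot karr kabs ksing kall kapp ksub tvar tabs tapp ttabs ttapp tsub skintv skpi strefl sttrans sttop stbot stbeta1 stbeta2 steta1 steta2 starr stabs stall stapp stbnd1 stbnd2 stintv stsub keanti teanti _ _ _ h,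
   fun h => @TyEq.rec (fun Γ _ => M1 Γ) (fun Γ K _ => M2 Γ K) (fun Γ A K _ => M3 Γ A K) (fun Γ t A _ => M4 Γ t A) (fun Γ J K _ => M5 Γ J K) (fun Γ A B K _ => M6 Γ A B K) (fun Γ J K _ => M7 Γ J K) (fun Γ A B K _ => M8 Γ A B K) nil cty ctm kintv kpi kvar ktop kbot karr kabs ksing kall kapp ksub tvar tabs tapp ttabs ttapp tsub skintv skpi strefl sttrans sttop stbot stbeta1 stbeta2 steta1 steta2 starr stabs stall stapp stbnd1 stbnd2 stintv stsub keanti teanti _ _ _ _ h⟩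

/-! ### Arithmetic commutation lemmas -/

theorem Kd.weaken_shift_lt {K : Kd} {m c : ℕ} (h : m ≤ c) :
    (K.weaken m).shift c = (K.shift (c - m)).weaken m := by
  rw [Kd.weaken_eq, Kd.shift_eq, Kd.shift_eq, Kd.weaken_eq, Kd.rn_rn, Kd.rn_rn,
    Kd.rn_eq_asub, Kd.rn_eq_asub]
  congr 1; funext i; simp only [rsh]; split_ifs <;> (congr 1 <;> omega)

theorem Ty.weaken_shift_lt {A : Ty} {m c : ℕ} (h : m ≤ c) :
    (A.weaken m).shift c = (A.shift (c - m)).weaken m := by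
  rw [Ty.weaken_eq, Ty.shift_eq, Ty.shift_eq, Ty.weaken_eq, Ty.rn_rn, Ty.rn_rn,
    Ty.rn_eq_asub, Ty.rn_eq_asub]
  congr 1; funext i; simp only [rsh]; split_ifs <;> (congr 1 <;> omega)

theorem Kd.weaken_shift_ge {K : Kd} {m c : ℕ} (h : c ≤ m) :
    (K.weaken m).shift c = K.weaken (m + 1) := by
  rw [Kd.weaken_eq, Kd.shift_eq, Kd.weaken_eq, Kd.rn_rn, Kd.rn_eq_asub, Kd.rn_eq_asub]
  congr 1; funext i; simp only [rsh]; split_ifs <;> (congr 1 <;> omega)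

theorem Ty.weaken_shift_ge {A : Ty} {m c : ℕ} (h : c ≤ m) :
    (A.weaken m).shift c = A.weaken (m + 1) := by
  rw [Ty.weaken_eq, Ty.shift_eq, Ty.weaken_eq, Ty.rn_rn, Ty.rn_eq_asub, Ty.rn_eq_asub]
  congr 1; funext i; simp only [rsh]; split_ifs <;> (congr 1 <;> omega)

theorem sbs0_rn (B : Ty) (n : ℕ) :
    (fun i => (sbs 0 B i).rn (rsh n)) = (fun i => sbs 0 (B.rn (rsh n)) (rsh (n+1) i)) := by
  funext i
  cases i with
  | zero => simp [sbs, rsh]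
  | succ i =>
      rcases Nat.lt_or_ge i n with h1 | h1
      · simp [sbs, rsh, Ty.rn, h1, show i + 1 < n + 1 from by omega]
      · simp only [sbs, rsh, Ty.rn, show ¬ i < n from by omega,
          show ¬(i + 1 < n + 1) from by omega, if_false,
          show ¬(i + 1 = 0) from by omega, show (0:ℕ) < i + 1 from by omega, if_true,
          Nat.add_sub_cancel, show ¬(i + 1 + 1 = 0) from by omega,
          show (0:ℕ) < i + 1 + 1 from by omega]

theorem Kd.subst0_shift (K : Kd) (B : Ty) (n : ℕ) :
    (K.subst 0 B).shift n = (K.shift (n+1)).subst 0 (B.shift n) := by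
  rw [Kd.subst_eq, Kd.shift_eq, Kd.shift_eq, Ty.shift_eq, Kd.subst_eq,
    Kd.asub_rn, Kd.rn_asub]
  congr 1
  exact sbs0_rn B n

theorem Ty.subst0_shift (A : Ty) (B : Ty) (n : ℕ) :
    (A.subst 0 B).shift n = (A.shift (n+1)).subst 0 (B.shift n) := by
  rw [Ty.subst_eq, Ty.shift_eq, Ty.shift_eq, Ty.shift_eq, Ty.subst_eq,
    Ty.asub_rn, Ty.rn_asub]
  congr 1
  exact sbs0_rn B n

theorem Ty.shift0_shift (A : Ty) (n : ℕ) :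
    (A.shift 0).shift (n + 1) = (A.shift n).shift 0 := by
  rw [Ty.shift_eq, Ty.shift_eq, Ty.shift_eq, Ty.shift_eq, Ty.rn_rn, Ty.rn_rn,
    Ty.rn_eq_asub, Ty.rn_eq_asub]
  congr 1; funext i; simp only [rsh]; split_ifs <;> (congr 1 <;> omega)

theorem Kd.weaken_one (K : Kd) : K.weaken 1 = K.shift 0 := by
  rw [Kd.weaken_eq, Kd.shift_eq]
  rw [Kd.rn_eq_asub, Kd.rn_eq_asub]
  congr 1

theorem Kd.weaken_succ (K : Kd) (n : ℕ) : K.weaken (n + 1) = (K.weaken n).shift 0 := by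
  show (Kd.shift 0)^[n+1] K = _
  rw [Function.iterate_succ_apply']; rfl

theorem Ty.weaken_succ (A : Ty) (n : ℕ) : A.weaken (n + 1) = (A.weaken n).shift 0 := by
  show (Ty.shift 0)^[n+1] A = _
  rw [Function.iterate_succ_apply']; rfl

/-! ### Weakening -/

def OBind.shiftB (c : ℕ) : OBind → OBind
  | .ty K => .ty (K.shift c)
  | .tm A => .tm (A.shift c)

def wkPfx : Ctx → Ctx
  | [] => []
  | b :: Δ => b.shiftB Δ.length :: wkPfx Δ

@[simp] theorem wkPfx_length (Δ : Ctx) : (wkPfx Δ).length = Δ.length := by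
  induction Δ with
  | nil => rfl
  | cons b Δ ih => simp [wkPfx, ih]

theorem wkPfx_get {Δ : Ctx} {x : ℕ} (h : x < Δ.length) :
    (wkPfx Δ)[x]? = (Δ[x]?).map (OBind.shiftB (Δ.length - x - 1)) := by
  induction Δ generalizing x with
  | nil => simp at h
  | cons b Δ ih =>
      cases x with
      | zero => simp [wkPfx]
      | succ x =>
          simp only [wkPfx, List.getElem?_cons_succ, List.length_cons]
          rw [ih (by simpa using Nat.lt_of_succ_lt_succ h)]
          have : Δ.length + 1 - (x + 1) - 1 = Δ.length - x - 1 := by omega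
          rw [this]

theorem weakening :
    (∀ {E}, CtxWf E → ∀ Δ Γ b, E = Δ ++ Γ → CtxWf (b :: Γ) → CtxWf (wkPfx Δ ++ b :: Γ)) ∧
    (∀ {E K}, KdWf E K → ∀ Δ Γ b, E = Δ ++ Γ → CtxWf (b :: Γ) →
      KdWf (wkPfx Δ ++ b :: Γ) (K.shift Δ.length)) ∧
    (∀ {E A K}, Kinding E A K → ∀ Δ Γ b, E = Δ ++ Γ → CtxWf (b :: Γ) →
      Kinding (wkPfx Δ ++ b :: Γ) (A.shift Δ.length) (K.shift Δ.length)) ∧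
    (∀ {E} {t : Tm} {A}, Typing E t A → True) ∧
    (∀ {E J K}, SubKd E J K → ∀ Δ Γ b, E = Δ ++ Γ → CtxWf (b :: Γ) →
      SubKd (wkPfx Δ ++ b :: Γ) (J.shift Δ.length) (K.shift Δ.length)) ∧
    (∀ {E A B K}, SubTy E A B K → ∀ Δ Γ b, E = Δ ++ Γ → CtxWf (b :: Γ) →
      SubTy (wkPfx Δ ++ b :: Γ) (A.shift Δ.length) (B.shift Δ.length) (K.shift Δ.length)) ∧
    (∀ {E J K}, KdEq E J K → ∀ Δ Γ b, E = Δ ++ Γ → CtxWf (b :: Γ) →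
      KdEq (wkPfx Δ ++ b :: Γ) (J.shift Δ.length) (K.shift Δ.length)) ∧
    (∀ {E A B K}, TyEq E A B K → ∀ Δ Γ b, E = Δ ++ Γ → CtxWf (b :: Γ) →
      TyEq (wkPfx Δ ++ b :: Γ) (A.shift Δ.length) (B.shift Δ.length) (K.shift Δ.length)) := by
  refine allRec ?nil ?cty ?ctm ?kintv ?kpi ?kvar ?ktop ?kbot ?karr ?kabs ?ksing ?kall ?kapp
    ?ksub ?tvar ?tabs ?tapp ?ttabs ?ttapp ?tsub ?skintv ?skpi ?strefl ?sttrans ?sttop ?stbot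
    ?stbeta1 ?stbeta2 ?steta1 ?steta2 ?starr ?stabs ?stall ?stapp ?stbnd1 ?stbnd2 ?stintv
    ?stsub ?keanti ?teanti
  case nil =>
    intro Δ Γ b hE hb
    rcases List.append_eq_nil_iff.mp hE.symm with ⟨rfl, rfl⟩
    simpa [wkPfx] using hb
  case cty =>
    intro Γ0 K _ _ ih1 ih2 Δ Γ b hE hb
    cases Δ with
    | nil =>
        simp only [List.nil_append] at hE
        subst hE
        simpa [wkPfx] using hb
    | cons b0 Δ =>
        simp only [List.cons_append] at hE
        injection hE with h1 h2
        subst h1 h2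
        exact CtxWf.ty (ih1 Δ Γ b rfl hb) (ih2 Δ Γ b rfl hb)
  case ctm =>
    intro Γ0 A _ _ ih1 ih2 Δ Γ b hE hb
    cases Δ with
    | nil =>
        simp only [List.nil_append] at hE
        subst hE
        simpa [wkPfx] using hb
    | cons b0 Δ =>
        simp only [List.cons_append] at hE
        injection hE with h1 h2
        subst h1 h2
        have := ih2 Δ Γ b rfl hb
        exact CtxWf.tm (ih1 Δ Γ b rfl hb) this
  case kintv =>
    intro Γ0 A B _ _ ih1 ih2 Δ Γ b hE hb
    exact KdWf.intv (ih1 Δ Γ b hE hb) (ih2 Δ Γ b hE hb)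
  case kpi =>
    intro Γ0 J K _ _ ih1 ih2 Δ Γ b hE hb
    refine KdWf.pi (ih1 Δ Γ b hE hb) ?_
    have := ih2 (.ty J :: Δ) Γ b (by rw [hE]; rfl) hb
    simpa [wkPfx, OBind.shiftB] using this
  case kvar =>
    intro Γ0 x K _ hget ih1 Δ Γ b hE hb
    subst hE
    have hC := ih1 Δ Γ b rfl hb
    by_cases hx : x < Δ.length
    · rw [List.getElem?_append_left hx] at hget
      have hget' : (wkPfx Δ ++ b :: Γ)[x]? = some (.ty (K.shift (Δ.length - x - 1))) := by
        rw [List.getElem?_append_left (by simpa using hx), wkPfx_get hx, hget]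
        rfl
      have := Kinding.var hC hget'
      rw [Kd.weaken_shift_lt (show x + 1 ≤ Δ.length from hx)]
      simpa [Ty.shift, hx, Nat.sub_sub] using this
    · rw [List.getElem?_append_right (by omega)] at hget
      have hget' : (wkPfx Δ ++ b :: Γ)[x + 1]? = some (.ty K) := by
        rw [List.getElem?_append_right (by simp; omega)]
        simp only [wkPfx_length]
        rw [show x + 1 - Δ.length = (x - Δ.length) + 1 from by omega]
        simpa using hget
      have := Kinding.var hC hget'
      rw [Kd.weaken_shift_ge (show Δ.length ≤ x + 1 from by omega)]
      simpa [Ty.shift, hx] using this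
  case ktop =>
    intro Γ0 _ ih1 Δ Γ b hE hb
    exact Kinding.top (ih1 Δ Γ b hE hb)
  case kbot =>
    intro Γ0 _ ih1 Δ Γ b hE hb
    exact Kinding.bot (ih1 Δ Γ b hE hb)
  case karr =>
    intro Γ0 A B _ _ ih1 ih2 Δ Γ b hE hb
    exact Kinding.arr (ih1 Δ Γ b hE hb) (ih2 Δ Γ b hE hb)
  case kabs =>
    intro Γ0 J A K _ _ ih1 ih2 Δ Γ b hE hb
    refine Kinding.abs (ih1 Δ Γ b hE hb) ?_
    have := ih2 (.ty J :: Δ) Γ b (by rw [hE]; rfl) hb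
    simpa [wkPfx, OBind.shiftB] using this
  case ksing =>
    intro Γ0 A B C _ ih1 Δ Γ b hE hb
    exact Kinding.sing (ih1 Δ Γ b hE hb)
  case kall =>
    intro Γ0 K A _ _ ih1 ih2 Δ Γ b hE hb
    refine Kinding.all (ih1 Δ Γ b hE hb) ?_
    have := ih2 (.ty K :: Δ) Γ b (by rw [hE]; rfl) hb
    simpa [wkPfx, OBind.shiftB, Kd.star, Kd.shift, Ty.shift] using this
  case kapp =>
    intro Γ0 A J K B _ _ ih1 ih2 Δ Γ b hE hb
    have := Kinding.app (ih1 Δ Γ b hE hb) (ih2 Δ Γ b hE hb)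
    rw [Kd.subst0_shift]
    exact this
  case ksub =>
    intro Γ0 A J K _ _ ih1 ih2 Δ Γ b hE hb
    exact Kinding.sub (ih1 Δ Γ b hE hb) (ih2 Δ Γ b hE hb)
  case tvar => intro _ _ _ _ _ _; trivial
  case tabs => intro _ _ _ _ _ _ _ _ _ _; trivial
  case tapp => intro _ _ _ _ _ _ _ _ _; trivial
  case ttabs => intro _ _ _ _ _ _ _ _; trivial
  case ttapp => intro _ _ _ _ _ _ _ _ _; trivial
  case tsub => intro _ _ _ _ _ _ _ _; trivial
  case skintv =>
    intro Γ0 A2 A1 B1 B2 _ _ ih1 ih2 Δ Γ b hE hb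
    exact SubKd.intv (ih1 Δ Γ b hE hb) (ih2 Δ Γ b hE hb)
  case skpi =>
    intro Γ0 J1 K1 J2 K2 _ _ _ ih1 ih2 ih3 Δ Γ b hE hb
    refine SubKd.pi (ih1 Δ Γ b hE hb) (ih2 Δ Γ b hE hb) ?_
    have := ih3 (.ty J2 :: Δ) Γ b (by rw [hE]; rfl) hb
    simpa [wkPfx, OBind.shiftB] using this
  case strefl =>
    intro Γ0 A K _ ih1 Δ Γ b hE hb
    exact SubTy.refl (ih1 Δ Γ b hE hb)
  case sttrans =>
    intro Γ0 A B K C _ _ ih1 ih2 Δ Γ b hE hb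
    exact SubTy.trans (ih1 Δ Γ b hE hb) (ih2 Δ Γ b hE hb)
  case sttop =>
    intro Γ0 A B C _ ih1 Δ Γ b hE hb
    exact SubTy.top (ih1 Δ Γ b hE hb)
  case stbot =>
    intro Γ0 A B C _ ih1 Δ Γ b hE hb
    exact SubTy.bot (ih1 Δ Γ b hE hb)
  case stbeta1 =>
    intro J Γ0 A K B _ _ ih1 ih2 Δ Γ b hE hb
    have h1 := ih1 (.ty J :: Δ) Γ b (by rw [hE]; rfl) hb
    simp only [wkPfx, OBind.shiftB, List.length_cons] at h1
    have := SubTy.beta₁ h1 (ih2 Δ Γ b hE hb)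
    rw [Kd.subst0_shift, Ty.subst0_shift]
    exact this
  case stbeta2 =>
    intro J Γ0 A K B _ _ ih1 ih2 Δ Γ b hE hb
    have h1 := ih1 (.ty J :: Δ) Γ b (by rw [hE]; rfl) hb
    simp only [wkPfx, OBind.shiftB, List.length_cons] at h1
    have := SubTy.beta₂ h1 (ih2 Δ Γ b hE hb)
    rw [Kd.subst0_shift, Ty.subst0_shift]
    exact this
  case steta1 =>
    intro Γ0 A J K _ ih1 Δ Γ b hE hb
    have := SubTy.eta₁ (ih1 Δ Γ b hE hb)
    simp only [Ty.shift, Kd.shift, if_pos (Nat.succ_pos Δ.length)]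
    rw [Ty.shift0_shift]
    exact this
  case steta2 =>
    intro Γ0 A J K _ ih1 Δ Γ b hE hb
    have := SubTy.eta₂ (ih1 Δ Γ b hE hb)
    simp only [Ty.shift, Kd.shift, if_pos (Nat.succ_pos Δ.length)]
    rw [Ty.shift0_shift]
    exact this
  case starr =>
    intro Γ0 A2 A1 B1 B2 _ _ ih1 ih2 Δ Γ b hE hb
    exact SubTy.arr (ih1 Δ Γ b hE hb) (ih2 Δ Γ b hE hb)
  case stabs =>
    intro Γ0 J1 A1 J K J2 A2 _ _ _ ih1 ih2 ih3 Δ Γ b hE hb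
    refine SubTy.abs (ih1 Δ Γ b hE hb) (ih2 Δ Γ b hE hb) ?_
    have := ih3 (.ty J :: Δ) Γ b (by rw [hE]; rfl) hb
    simpa [wkPfx, OBind.shiftB] using this
  case stall =>
    intro Γ0 K1 A1 K2 A2 _ _ _ ih1 ih2 ih3 Δ Γ b hE hb
    refine SubTy.all (ih1 Δ Γ b hE hb) (ih2 Δ Γ b hE hb) ?_
    have := ih3 (.ty K2 :: Δ) Γ b (by rw [hE]; rfl) hb
    simpa [wkPfx, OBind.shiftB, Kd.star, Kd.shift, Ty.shift] using this
  case stapp =>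
    intro Γ0 A1 A2 J K B1 B2 _ _ ih1 ih2 Δ Γ b hE hb
    have := SubTy.app (ih1 Δ Γ b hE hb) (ih2 Δ Γ b hE hb)
    rw [Kd.subst0_shift]
    exact this
  case stbnd1 =>
    intro Γ0 A B1 B2 _ ih1 Δ Γ b hE hb
    exact SubTy.bnd₁ (ih1 Δ Γ b hE hb)
  case stbnd2 =>
    intro Γ0 A B1 B2 _ ih1 Δ Γ b hE hb
    exact SubTy.bnd₂ (ih1 Δ Γ b hE hb)
  case stintv =>
    intro Γ0 A1 A2 B C _ ih1 Δ Γ b hE hb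
    exact SubTy.intv (ih1 Δ Γ b hE hb)
  case stsub =>
    intro Γ0 A1 A2 J K _ _ ih1 ih2 Δ Γ b hE hb
    exact SubTy.sub (ih1 Δ Γ b hE hb) (ih2 Δ Γ b hE hb)
  case keanti =>
    intro Γ0 J K _ _ ih1 ih2 Δ Γ b hE hb
    exact KdEq.antisym (ih1 Δ Γ b hE hb) (ih2 Δ Γ b hE hb)
  case teanti =>
    intro Γ0 A B K _ _ ih1 ih2 Δ Γ b hE hb
    exact TyEq.antisym (ih1 Δ Γ b hE hb) (ih2 Δ Γ b hE hb)

/-! ### Corollaries of weakening and misc lemmas -/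

theorem CtxWf.tail {b : OBind} {Γ : Ctx} (h : CtxWf (b :: Γ)) : CtxWf Γ := by
  cases h <;> assumption

theorem KdWf.wk1 {Γ K} (h : KdWf Γ K) {b} (hb : CtxWf (b :: Γ)) :
    KdWf (b :: Γ) (K.shift 0) := by
  simpa [wkPfx] using weakening.2.1 h [] Γ b rfl hb

theorem Kinding.wk1 {Γ A K} (h : Kinding Γ A K) {b} (hb : CtxWf (b :: Γ)) :
    Kinding (b :: Γ) (A.shift 0) (K.shift 0) := by
  simpa [wkPfx] using weakening.2.2.1 h [] Γ b rfl hb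

theorem SubKd.wk1 {Γ J K} (h : SubKd Γ J K) {b} (hb : CtxWf (b :: Γ)) :
    SubKd (b :: Γ) (J.shift 0) (K.shift 0) := by
  simpa [wkPfx] using weakening.2.2.2.2.1 h [] Γ b rfl hb

theorem SubTy.wk1 {Γ A B K} (h : SubTy Γ A B K) {b} (hb : CtxWf (b :: Γ)) :
    SubTy (b :: Γ) (A.shift 0) (B.shift 0) (K.shift 0) := by
  simpa [wkPfx] using weakening.2.2.2.2.2.1 h [] Γ b rfl hb

theorem lookup_wf_ty {Γ : Ctx} {x : ℕ} {K : Kd} (hw : CtxWf Γ)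
    (h : Γ[x]? = some (.ty K)) : KdWf Γ (K.weaken (x + 1)) := by
  induction x generalizing Γ with
  | zero =>
      cases Γ with
      | nil => simp at h
      | cons b Γ =>
          simp only [List.getElem?_cons_zero, Option.some_inj] at h
          subst h
          cases hw with
          | ty hw hK => rw [Kd.weaken_one]; exact hK.wk1 (CtxWf.ty hw hK)
  | succ x ih =>
      cases Γ with
      | nil => simp at h
      | cons b Γ =>
          simp only [List.getElem?_cons_succ] at h
          have := ih hw.tail h
          rw [Kd.weaken_succ]
          exact this.wk1 hw

theorem lookup_wf_tm {Γ : Ctx} {x : ℕ} {A : Ty} (hw : CtxWf Γ)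
    (h : Γ[x]? = some (.tm A)) : Kinding Γ (A.weaken (x + 1)) Kd.star := by
  induction x generalizing Γ with
  | zero =>
      cases Γ with
      | nil => simp at h
      | cons b Γ =>
          simp only [List.getElem?_cons_zero, Option.some_inj] at h
          subst h
          cases hw with
          | tm hw hA =>
              have := hA.wk1 (CtxWf.tm hw hA)
              rw [show Ty.weaken 1 A = A.shift 0 from by
                rw [Ty.weaken_eq, Ty.shift_eq]; rw [Ty.rn_eq_asub, Ty.rn_eq_asub]; congr 1]
              exact this
  | succ x ih =>
      cases Γ with
      | nil => simp at h
      | cons b Γ =>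
          simp only [List.getElem?_cons_succ] at h
          have := (ih hw.tail h).wk1 hw
          rw [Ty.weaken_succ]
          exact this

theorem subKd_refl : ∀ {K : Kd} {Γ : Ctx}, KdWf Γ K → SubKd Γ K K
  | .intv _ _, _, h => by
      cases h with
      | intv h1 h2 => exact SubKd.intv (SubTy.refl h1) (SubTy.refl h2)
  | .pi j k, _, h => by
      cases h with
      | pi h1 h2 => exact SubKd.pi (KdWf.pi h1 h2) (subKd_refl h1) (subKd_refl h2)

theorem KdWf.star {Γ : Ctx} (h : CtxWf Γ) : KdWf Γ Kd.star :=
  KdWf.intv (Kinding.bot h) (Kinding.top h)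

theorem KdWf.intv_inv {Γ A B} (h : KdWf Γ (Kd.intv A B)) :
    Kinding Γ A Kd.star ∧ Kinding Γ B Kd.star := by
  cases h with
  | intv h1 h2 => exact ⟨h1, h2⟩

theorem KdWf.pi_inv {Γ J K} (h : KdWf Γ (Kd.pi J K)) :
    KdWf Γ J ∧ KdWf (.ty J :: Γ) K := by
  cases h with
  | pi h1 h2 => exact ⟨h1, h2⟩

theorem SubKd.intv_inv {Γ A₁ B₁ A₂ B₂} (h : SubKd Γ (Kd.intv A₁ B₁) (Kd.intv A₂ B₂)) :
    SubTy Γ A₂ A₁ Kd.star ∧ SubTy Γ B₁ B₂ Kd.star := by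
  cases h with
  | intv h1 h2 => exact ⟨h1, h2⟩

/-- convert a kinding at an interval kind to kind `∗`. -/
theorem kinding_star {Γ A B C} (h : Kinding Γ A (Kd.intv B C))
    (hw : KdWf Γ (Kd.intv B C)) : Kinding Γ A Kd.star := by
  rcases hw.intv_inv with ⟨hB, hC⟩
  exact Kinding.sub h (SubKd.intv (SubTy.bot hB) (SubTy.top hC))

theorem subty_star {Γ X Y B C B' C' B'' C''} (h : SubTy Γ X Y (Kd.intv B C))
    (hX : Kinding Γ X (Kd.intv B' C')) (hY : Kinding Γ Y (Kd.intv B'' C'')) :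
    SubTy Γ X Y Kd.star :=
  SubTy.sub (SubTy.intv h) (SubKd.intv (SubTy.bot hX) (SubTy.top hY))

/-! ### Inversion for `arr` and `all` kindings -/

theorem kinding_inv :
    (∀ {E}, CtxWf E → True) ∧ (∀ {E K}, KdWf E K → True) ∧
    (∀ {E T K}, Kinding E T K →
      (∀ A B, T = .arr A B → Kinding E A Kd.star ∧ Kinding E B Kd.star) ∧
      (∀ K₀ A, T = .all K₀ A → KdWf E K₀ ∧ Kinding (.ty K₀ :: E) A Kd.star)) ∧
    (∀ {E} {t : Tm} {A}, Typing E t A → True) ∧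
    (∀ {E J K}, SubKd E J K → True) ∧
    (∀ {E A B K}, SubTy E A B K → True) ∧
    (∀ {E J K}, KdEq E J K → True) ∧
    (∀ {E A B K}, TyEq E A B K → True) := by
  refine allRec ?nil ?cty ?ctm ?kintv ?kpi ?kvar ?ktop ?kbot ?karr ?kabs ?ksing ?kall ?kapp
    ?ksub ?tvar ?tabs ?tapp ?ttabs ?ttapp ?tsub ?skintv ?skpi ?strefl ?sttrans ?sttop ?stbot
    ?stbeta1 ?stbeta2 ?steta1 ?steta2 ?starr ?stabs ?stall ?stapp ?stbnd1 ?stbnd2 ?stintv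
    ?stsub ?keanti ?teanti
  case kvar =>
    intros
    exact ⟨fun _ _ h => (nomatch h), fun _ _ h => nomatch h⟩
  case ktop =>
    intros
    exact ⟨fun _ _ h => (nomatch h), fun _ _ h => nomatch h⟩
  case kbot =>
    intros
    exact ⟨fun _ _ h => (nomatch h), fun _ _ h => nomatch h⟩
  case karr =>
    intros
    rename_i h1 h2 _ _
    refine ⟨fun A' B' h => ?_, fun _ _ h => nomatch h⟩
    cases h
    exact ⟨h1, h2⟩
  case kabs =>
    intros
    exact ⟨fun _ _ h => (nomatch h), fun _ _ h => nomatch h⟩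
  case ksing =>
    intros
    rename_i ih
    exact ih
  case kall =>
    intros
    rename_i h1 h2 _ _
    refine ⟨fun _ _ h => (nomatch h), fun K' A' h => ?_⟩
    cases h
    exact ⟨h1, h2⟩
  case kapp =>
    intros
    exact ⟨fun _ _ h => (nomatch h), fun _ _ h => nomatch h⟩
  case ksub =>
    intros
    rename_i ih _
    exact ih
  all_goals intros <;> trivial

theorem kinding_arr_inv {Γ A B K} (h : Kinding Γ (Ty.arr A B) K) :
    Kinding Γ A Kd.star ∧ Kinding Γ B Kd.star :=
  (kinding_inv.2.2.1 h).1 A B rfl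

theorem kinding_all_inv {Γ K₀ A K} (h : Kinding Γ (Ty.all K₀ A) K) :
    KdWf Γ K₀ ∧ Kinding (.ty K₀ :: Γ) A Kd.star :=
  (kinding_inv.2.2.1 h).2 K₀ A rfl

/-! ### Substitution-function equalities -/

theorem Kd.weaken_zero (K : Kd) : K.weaken 0 = K := rfl
theorem Ty.weaken_zero (A : Ty) : A.weaken 0 = A := rfl

@[simp] theorem Kd.star_asub (σ : Sb) : Kd.star.asub σ = Kd.star := rfl

theorem Kd.shift0_rn (K : Kd) : K.shift 0 = K.rn Nat.succ := by
  rw [Kd.shift_eq]; congr 1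

theorem Kd.asub_weaken (K : Kd) (m : ℕ) (σ : Sb) :
    (K.weaken m).asub σ = K.asub (fun i => σ (i + m)) := by
  rw [Kd.weaken_eq, Kd.rn_asub]

theorem Ty.asub_weaken (A : Ty) (m : ℕ) (σ : Sb) :
    (A.weaken m).asub σ = A.asub (fun i => σ (i + m)) := by
  rw [Ty.weaken_eq, Ty.rn_asub]

theorem Kd.weaken_lift (K : Kd) (m : ℕ) (σ : Sb) :
    (K.weaken (m + 1)).asub (Sb.lift σ) = ((K.weaken m).asub σ).shift 0 := by
  rw [Kd.shift0_rn, Kd.asub_weaken, Kd.asub_weaken, Kd.asub_rn]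
  congr 1

theorem Ty.weaken_lift (A : Ty) (m : ℕ) (σ : Sb) :
    (A.weaken (m + 1)).asub (Sb.lift σ) = ((A.weaken m).asub σ).shift 0 := by
  rw [Ty.shift0_rn, Ty.asub_weaken, Ty.asub_weaken, Ty.asub_rn]
  congr 1

theorem Kd.weaken_scons (K : Kd) (m : ℕ) (b : Ty) (σ : Sb) :
    (K.weaken (m + 1)).asub (scons b σ) = (K.weaken m).asub σ := by
  rw [Kd.asub_weaken, Kd.asub_weaken]
  congr 1

theorem scons_comp (B : Ty) (σ : Sb) :
    (fun i => (sbs 0 B i).asub σ) = scons (B.asub σ) σ := by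
  funext i
  cases i with
  | zero => rfl
  | succ i => simp only [sbs, show ¬(i+1 = 0) from by omega, if_false,
      show (0:ℕ) < i + 1 from by omega, if_true, Nat.add_sub_cancel, Ty.asub, scons]

theorem Ty.subst0_asub (A B : Ty) (σ : Sb) :
    (A.subst 0 B).asub σ = A.asub (scons (B.asub σ) σ) := by
  rw [Ty.subst_eq, Ty.asub_asub, scons_comp]

theorem Kd.subst0_asub (K : Kd) (B : Ty) (σ : Sb) :
    (K.subst 0 B).asub σ = K.asub (scons (B.asub σ) σ) := by
  rw [Kd.subst_eq, Kd.asub_asub, scons_comp]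

theorem lift_sbs0 (σ : Sb) (b : Ty) :
    (fun i => (Sb.lift σ i).asub (sbs 0 b)) = scons b σ := by
  funext i
  cases i with
  | zero => rfl
  | succ i =>
      show ((σ i).rn Nat.succ).asub (sbs 0 b) = σ i
      rw [Ty.rn_asub]
      rw [show (fun j => sbs 0 b (Nat.succ j)) = Ty.var from funext fun j => by
        simp [sbs, show ¬(j+1 = 0) from by omega, show (0:ℕ) < j + 1 from by omega]]
      exact Ty.asub_var _

theorem Ty.lift_subst0 (A : Ty) (σ : Sb) (b : Ty) :
    (A.asub (Sb.lift σ)).subst 0 b = A.asub (scons b σ) := by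
  rw [Ty.subst_eq, Ty.asub_asub, lift_sbs0]

theorem Kd.lift_subst0 (K : Kd) (σ : Sb) (b : Ty) :
    (K.asub (Sb.lift σ)).subst 0 b = K.asub (scons b σ) := by
  rw [Kd.subst_eq, Kd.asub_asub, lift_sbs0]

theorem Kd.eta_subst (K : Kd) : (K.shift 1).subst 0 (.var 0) = K := by
  rw [Kd.shift_eq, Kd.subst_eq, Kd.rn_asub]
  rw [show (fun i => sbs 0 (Ty.var 0) (rsh 1 i)) = Ty.var from ?_, Kd.asub_var]
  funext i
  cases i with
  | zero => rfl
  | succ i =>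
      simp only [rsh, show ¬(i + 1 < 1) from by omega, if_false, sbs,
        show ¬(i+1+1 = 0) from by omega, if_false, show (0:ℕ) < i+1+1 from by omega, if_true]
      congr 1

theorem Ty.asub_shift (A : Ty) (n : ℕ) (τ : Sb) :
    (A.shift n).asub τ = A.asub (fun i => τ (rsh n i)) := by
  rw [Ty.shift_eq, Ty.rn_asub]

theorem Kd.asub_shift (K : Kd) (n : ℕ) (τ : Sb) :
    (K.shift n).asub τ = K.asub (fun i => τ (rsh n i)) := by
  rw [Kd.shift_eq, Kd.rn_asub]

/-- shifted-prefix entry kinds under precomposed substitutions -/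
theorem Kd.unweaken_entry {K : Kd} {x n : ℕ} (h : x < n) (τ : Sb) :
    (K.weaken (x+1)).asub (fun i => τ (rsh n i)) = ((K.shift (n-1-x)).weaken (x+1)).asub τ := by
  rw [Kd.asub_weaken, Kd.shift_eq, Kd.weaken_eq, Kd.rn_rn, Kd.rn_asub]
  congr 1
  funext i
  simp only [rsh]
  split_ifs <;> (congr 1 <;> omega)

theorem Kd.unweaken_entry_ge {K : Kd} {x n : ℕ} (h : n ≤ x) (τ : Sb) :
    (K.weaken (x+1)).asub (fun i => τ (rsh n i)) = (K.weaken (x+2)).asub τ := by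
  rw [Kd.asub_weaken, Kd.asub_weaken]
  congr 1
  funext i
  simp only [rsh, show ¬(i + (x+1) < n) from by omega, if_false]
  have : i + (x + 1) + 1 = i + (x + 2) := by omega
  rw [this]

theorem Kd.drop_entry (K : Kd) (x n : ℕ) (τ : Sb) :
    (K.weaken (x+1)).asub (fun i => τ (i + n)) = (K.weaken (x+n+1)).asub τ := by
  rw [Kd.asub_weaken, Kd.asub_weaken]
  congr 1
  funext i
  congr 1
  omega

theorem Kd.weaken_one_lift (K : Kd) (σ : Sb) :
    (K.weaken 1).asub (Sb.lift σ) = (K.asub σ).shift 0 := by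
  have := Kd.weaken_lift K 0 σ
  rwa [Kd.weaken_zero] at this

theorem Kd.weaken_one_scons (K : Kd) (b : Ty) (σ : Sb) :
    (K.weaken 1).asub (scons b σ) = K.asub σ := by
  have := Kd.weaken_scons K 0 b σ
  rwa [Kd.weaken_zero] at this

/-! ### Equal substitutions -/

def EqSub (σ₁ σ₂ : Sb) (E Γ' : Ctx) : Prop :=
  CtxWf Γ' ∧ ∀ x K, E[x]? = some (.ty K) →
    Kinding Γ' (σ₁ x) ((K.weaken (x+1)).asub σ₁) ∧
    Kinding Γ' (σ₂ x) ((K.weaken (x+1)).asub σ₂) ∧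
    Kinding Γ' (σ₂ x) ((K.weaken (x+1)).asub σ₁) ∧
    SubTy Γ' (σ₁ x) (σ₂ x) ((K.weaken (x+1)).asub σ₁) ∧
    SubTy Γ' (σ₂ x) (σ₁ x) ((K.weaken (x+1)).asub σ₁) ∧
    KdWf Γ' ((K.weaken (x+1)).asub σ₁) ∧
    KdWf Γ' ((K.weaken (x+1)).asub σ₂) ∧
    SubKd Γ' ((K.weaken (x+1)).asub σ₁) ((K.weaken (x+1)).asub σ₂) ∧
    SubKd Γ' ((K.weaken (x+1)).asub σ₂) ((K.weaken (x+1)).asub σ₁)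

theorem EqSub.wf {σ₁ σ₂ E Γ'} (h : EqSub σ₁ σ₂ E Γ') : CtxWf Γ' := h.1

theorem EqSub.left {σ₁ σ₂ E Γ'} (h : EqSub σ₁ σ₂ E Γ') : EqSub σ₁ σ₁ E Γ' := by
  refine ⟨h.1, fun x K hx => ?_⟩
  obtain ⟨k1, k2, k3, s1, s2, w1, w2, d1, d2⟩ := h.2 x K hx
  exact ⟨k1, k1, k1, SubTy.refl k1, SubTy.refl k1, w1, w1, subKd_refl w1, subKd_refl w1⟩

theorem EqSub.right {σ₁ σ₂ E Γ'} (h : EqSub σ₁ σ₂ E Γ') : EqSub σ₂ σ₂ E Γ' := by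
  refine ⟨h.1, fun x K hx => ?_⟩
  obtain ⟨k1, k2, k3, s1, s2, w1, w2, d1, d2⟩ := h.2 x K hx
  exact ⟨k2, k2, k2, SubTy.refl k2, SubTy.refl k2, w2, w2, subKd_refl w2, subKd_refl w2⟩

theorem EqSub.id {E : Ctx} (h : CtxWf E) : EqSub Ty.var Ty.var E E := by
  refine ⟨h, fun x K hx => ?_⟩
  rw [Kd.asub_var]
  have k := Kinding.var h hx
  have w := lookup_wf_ty h hx
  exact ⟨k, k, k, SubTy.refl k, SubTy.refl k, w, w, subKd_refl w, subKd_refl w⟩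

/-- Extending equal substitutions under a type-variable binder. -/
theorem EqSub.lift {σ₁ σ₂ E Γ'} (h : EqSub σ₁ σ₂ E Γ') {J L : Kd}
    (hL : KdWf Γ' L) (hL1 : SubKd Γ' L (J.asub σ₁)) (hL2 : SubKd Γ' L (J.asub σ₂))
    (hJ1 : KdWf Γ' (J.asub σ₁)) (hJ2 : KdWf Γ' (J.asub σ₂))
    (hJ12 : SubKd Γ' (J.asub σ₁) (J.asub σ₂)) (hJ21 : SubKd Γ' (J.asub σ₂) (J.asub σ₁)) :
    EqSub (Sb.lift σ₁) (Sb.lift σ₂) (.ty J :: E) (.ty L :: Γ') := by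
  have hC : CtxWf (.ty L :: Γ') := CtxWf.ty h.1 hL
  refine ⟨hC, fun x K hx => ?_⟩
  cases x with
  | zero =>
      simp only [List.getElem?_cons_zero, Option.some_inj] at hx
      injection hx with hx
      subst hx
      rw [Kd.weaken_one_lift, Kd.weaken_one_lift]
      have k0 : Kinding (.ty L :: Γ') (Ty.var 0) (L.shift 0) := by
        have := Kinding.var hC (show (.ty L :: Γ')[0]? = some (.ty L) by simp)
        rwa [Kd.weaken_one] at this
      have k1 : Kinding (.ty L :: Γ') (Ty.var 0) ((J.asub σ₁).shift 0) :=
        Kinding.sub k0 (hL1.wk1 hC)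
      have k2 : Kinding (.ty L :: Γ') (Ty.var 0) ((J.asub σ₂).shift 0) :=
        Kinding.sub k0 (hL2.wk1 hC)
      exact ⟨k1, k2, k1, SubTy.refl k1, SubTy.refl k1, hJ1.wk1 hC, hJ2.wk1 hC,
        hJ12.wk1 hC, hJ21.wk1 hC⟩
  | succ x =>
      simp only [List.getElem?_cons_succ] at hx
      obtain ⟨k1, k2, k3, s1, s2, w1, w2, d1, d2⟩ := h.2 x K hx
      have e : ∀ σ : Sb, (K.weaken (x+1+1)).asub (Sb.lift σ) = ((K.weaken (x+1)).asub σ).shift 0 :=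
        fun σ => Kd.weaken_lift K (x+1) σ
      have et : ∀ σ : Sb, Sb.lift σ (x+1) = (σ x).shift 0 := fun σ => (Ty.shift0_rn (σ x)).symm
      rw [e, e, et, et]
      exact ⟨k1.wk1 hC, k2.wk1 hC, k3.wk1 hC, s1.wk1 hC, s2.wk1 hC, w1.wk1 hC, w2.wk1 hC,
        d1.wk1 hC, d2.wk1 hC⟩

/-- cons extension of equal substitutions -/
theorem EqSub.cons {σ₁ σ₂ E Γ'} (h : EqSub σ₁ σ₂ E Γ') {J : Kd} {b₁ b₂ : Ty}
    (k1 : Kinding Γ' b₁ (J.asub σ₁)) (k2 : Kinding Γ' b₂ (J.asub σ₂))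
    (k3 : Kinding Γ' b₂ (J.asub σ₁))
    (s1 : SubTy Γ' b₁ b₂ (J.asub σ₁)) (s2 : SubTy Γ' b₂ b₁ (J.asub σ₁))
    (w1 : KdWf Γ' (J.asub σ₁)) (w2 : KdWf Γ' (J.asub σ₂))
    (d1 : SubKd Γ' (J.asub σ₁) (J.asub σ₂)) (d2 : SubKd Γ' (J.asub σ₂) (J.asub σ₁)) :
    EqSub (scons b₁ σ₁) (scons b₂ σ₂) (.ty J :: E) Γ' := by
  refine ⟨h.1, fun x K hx => ?_⟩
  cases x with
  | zero =>
      simp only [List.getElem?_cons_zero, Option.some_inj] at hx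
      injection hx with hx
      subst hx
      rw [Kd.weaken_one_scons, Kd.weaken_one_scons]
      exact ⟨k1, k2, k3, s1, s2, w1, w2, d1, d2⟩
  | succ x =>
      simp only [List.getElem?_cons_succ] at hx
      have e : ∀ (b : Ty) (σ : Sb), (K.weaken (x+1+1)).asub (scons b σ) = (K.weaken (x+1)).asub σ :=
        fun b σ => Kd.weaken_scons K (x+1) b σ
      rw [e, e]
      exact h.2 x K hx

/-- Precomposing with the weakening renaming. -/
theorem EqSub.unweaken {τ₁ τ₂ : Sb} {Δ Γ : Ctx} {b : OBind} {Γ' : Ctx}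
    (h : EqSub τ₁ τ₂ (wkPfx Δ ++ b :: Γ) Γ') :
    EqSub (fun i => τ₁ (rsh Δ.length i)) (fun i => τ₂ (rsh Δ.length i)) (Δ ++ Γ) Γ' := by
  refine ⟨h.1, fun x K hx => ?_⟩
  by_cases hc : x < Δ.length
  · rw [List.getElem?_append_left hc] at hx
    have hx' : (wkPfx Δ ++ b :: Γ)[x]? = some (.ty (K.shift (Δ.length - 1 - x))) := by
      rw [List.getElem?_append_left (by simpa using hc), wkPfx_get hc, hx]
      simp [OBind.shiftB]
      rw [show Δ.length - x - 1 = Δ.length - 1 - x from by omega]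
    obtain ⟨k1, k2, k3, s1, s2, w1, w2, d1, d2⟩ := h.2 x _ hx'
    have e : ∀ τ : Sb, (K.weaken (x+1)).asub (fun i => τ (rsh Δ.length i)) =
        ((K.shift (Δ.length - 1 - x)).weaken (x+1)).asub τ :=
      fun τ => Kd.unweaken_entry hc τ
    have et : ∀ τ : Sb, (fun i => τ (rsh Δ.length i)) x = τ x := fun τ => by
      simp only [rsh, if_pos hc]
    rw [e, e, et, et]
    exact ⟨k1, k2, k3, s1, s2, w1, w2, d1, d2⟩
  · push_neg at hc
    rw [List.getElem?_append_right (by omega)] at hx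
    have hx' : (wkPfx Δ ++ b :: Γ)[x + 1]? = some (.ty K) := by
      rw [List.getElem?_append_right (by simp; omega)]
      simp only [wkPfx_length]
      rw [show x + 1 - Δ.length = (x - Δ.length) + 1 from by omega]
      simpa using hx
    obtain ⟨k1, k2, k3, s1, s2, w1, w2, d1, d2⟩ := h.2 (x+1) _ hx'
    have e : ∀ τ : Sb, (K.weaken (x+1)).asub (fun i => τ (rsh Δ.length i)) =
        (K.weaken (x+1+1)).asub τ := fun τ => Kd.unweaken_entry_ge hc τ
    have et : ∀ τ : Sb, (fun i => τ (rsh Δ.length i)) x = τ (x+1) := fun τ => by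
      simp only [rsh, if_neg (by omega : ¬ x < Δ.length)]
    rw [e, e, et, et]
    exact ⟨k1, k2, k3, s1, s2, w1, w2, d1, d2⟩

/-- Dropping a prefix. -/
theorem EqSub.drop {τ₁ τ₂ : Sb} {Δ' E Γ' : Ctx}
    (h : EqSub τ₁ τ₂ (Δ' ++ E) Γ') :
    EqSub (fun i => τ₁ (i + Δ'.length)) (fun i => τ₂ (i + Δ'.length)) E Γ' := by
  refine ⟨h.1, fun x K hx => ?_⟩
  have hx' : (Δ' ++ E)[x + Δ'.length]? = some (.ty K) := by
    rw [List.getElem?_append_right (by omega)]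
    simpa using hx
  obtain ⟨k1, k2, k3, s1, s2, w1, w2, d1, d2⟩ := h.2 (x + Δ'.length) _ hx'
  have e : ∀ τ : Sb, (K.weaken (x+1)).asub (fun i => τ (i + Δ'.length)) =
      (K.weaken (x + Δ'.length + 1)).asub τ := fun τ => Kd.drop_entry K x Δ'.length τ
  rw [e, e]
  exact ⟨k1, k2, k3, s1, s2, w1, w2, d1, d2⟩

/-! ### The `Good` predicates -/

def KdF (E : Ctx) (K : Kd) : Prop := ∀ Γ' σ₁ σ₂, EqSub σ₁ σ₂ E Γ' →
  KdWf Γ' (K.asub σ₁) ∧ KdWf Γ' (K.asub σ₂) ∧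
  SubKd Γ' (K.asub σ₁) (K.asub σ₂) ∧ SubKd Γ' (K.asub σ₂) (K.asub σ₁)

def GKd : Ctx → Kd → Prop
  | E, .intv a b => KdF E (.intv a b)
  | E, .pi j k => KdF E (.pi j k) ∧ GKd E j ∧ GKd (.ty j :: E) k

def GTy (E : Ctx) (A : Ty) (K : Kd) : Prop := ∀ Γ' σ₁ σ₂, EqSub σ₁ σ₂ E Γ' →
  Kinding Γ' (A.asub σ₁) (K.asub σ₁) ∧ Kinding Γ' (A.asub σ₂) (K.asub σ₂) ∧
  Kinding Γ' (A.asub σ₂) (K.asub σ₁) ∧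
  SubTy Γ' (A.asub σ₁) (A.asub σ₂) (K.asub σ₁) ∧ SubTy Γ' (A.asub σ₂) (A.asub σ₁) (K.asub σ₁)

theorem GKd.kdf : ∀ {E K}, GKd E K → KdF E K := by
  intro E K
  cases K with
  | intv a b => exact fun h => h
  | pi j k => exact fun h => h.1

theorem GKd.star (E : Ctx) : GKd E Kd.star := by
  show KdF E Kd.star
  intro Γ' σ₁ σ₂ h
  have w : KdWf Γ' Kd.star := KdWf.star h.wf
  exact ⟨w, w, subKd_refl w, subKd_refl w⟩

/-! ### Middle weakening of the Good predicates -/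

theorem GTy.weaken {Δ Γ : Ctx} {A K} (h : GTy (Δ ++ Γ) A K) (b : OBind) :
    GTy (wkPfx Δ ++ b :: Γ) (A.shift Δ.length) (K.shift Δ.length) := by
  intro Γ' τ₁ τ₂ hτ
  have := h Γ' _ _ hτ.unweaken
  rw [Ty.asub_shift, Ty.asub_shift, Kd.asub_shift, Kd.asub_shift]
  exact this

theorem GKd.weaken : ∀ {K : Kd} {Δ Γ : Ctx}, GKd (Δ ++ Γ) K → ∀ (b : OBind),
    GKd (wkPfx Δ ++ b :: Γ) (K.shift Δ.length)
  | .intv a c, Δ, Γ, h, b => by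
      simp only [Kd.shift]
      show KdF _ _
      intro Γ' τ₁ τ₂ hτ
      have h1 := h Γ' _ _ hτ.unweaken
      have e : ∀ τ : Sb, (Kd.intv (a.shift Δ.length) (c.shift Δ.length)).asub τ
          = (Kd.intv a c).asub (fun i => τ (rsh Δ.length i)) := by
        intro τ
        show Kd.intv _ _ = Kd.intv _ _
        rw [Ty.asub_shift, Ty.asub_shift]
      rw [e, e]
      exact h1
  | .pi j k, Δ, Γ, h, b => by
      simp only [Kd.shift]
      refine ⟨?_, ?_, ?_⟩
      · intro Γ' τ₁ τ₂ hτ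
        have h1 := h.1 Γ' _ _ hτ.unweaken
        have e : ∀ τ : Sb, (Kd.pi (j.shift Δ.length) (k.shift (Δ.length + 1))).asub τ
            = (Kd.pi j k).asub (fun i => τ (rsh Δ.length i)) := by
          intro τ
          rw [show Kd.pi (j.shift Δ.length) (k.shift (Δ.length + 1)) =
            (Kd.pi j k).shift Δ.length from rfl, Kd.asub_shift]
        rw [e, e]
        exact h1
      · exact GKd.weaken h.2.1 b
      · have := GKd.weaken (K := k) (Δ := .ty j :: Δ) h.2.2 b
        simpa [wkPfx, OBind.shiftB] using this

theorem GTy.weaken1 {Γ : Ctx} {A K} (h : GTy Γ A K) (b : OBind) :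
    GTy (b :: Γ) (A.shift 0) (K.shift 0) := by
  have := GTy.weaken (Δ := []) h b
  simpa [wkPfx] using this

theorem GKd.weaken1 {Γ : Ctx} {K} (h : GKd Γ K) (b : OBind) :
    GKd (b :: Γ) (K.shift 0) := by
  have := GKd.weaken (Δ := []) h b
  simpa [wkPfx] using this

/-! ### Middle substitution of the Good predicates -/

def OBind.substB (n : ℕ) (B : Ty) : OBind → OBind
  | .ty K => .ty (K.subst n (B.weaken n))
  | .tm A => .tm (A.subst n (B.weaken n))

def sPfx (B : Ty) : Ctx → Ctx
  | [] => []
  | b :: Δ => b.substB Δ.length B :: sPfx B Δ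

@[simp] theorem sPfx_length (B : Ty) (Δ : Ctx) : (sPfx B Δ).length = Δ.length := by
  induction Δ with
  | nil => rfl
  | cons b Δ ih => simp [sPfx, ih]

theorem sPfx_get {B : Ty} {Δ : Ctx} {x : ℕ} (h : x < Δ.length) :
    (sPfx B Δ)[x]? = (Δ[x]?).map (OBind.substB (Δ.length - x - 1) B) := by
  induction Δ generalizing x with
  | nil => simp at h
  | cons b Δ ih =>
      cases x with
      | zero => simp [sPfx]
      | succ x =>
          simp only [sPfx, List.getElem?_cons_succ, List.length_cons]
          rw [ih (by simpa using Nat.lt_of_succ_lt_succ h)]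
          have : Δ.length + 1 - (x + 1) - 1 = Δ.length - x - 1 := by omega
          rw [this]

/-- the substitution function underlying a middle substitution -/
def mids (n : ℕ) (B : Ty) (τ : Sb) : Sb := fun x =>
  if x < n then τ x else if x = n then B.asub (fun i => τ (i + n)) else τ (x - 1)

theorem Ty.midsub (A : Ty) (n : ℕ) (B : Ty) (τ : Sb) :
    (A.subst n (B.weaken n)).asub τ = A.asub (mids n B τ) := by
  rw [Ty.subst_eq, Ty.asub_asub]
  congr 1
  funext x
  simp only [sbs, mids]
  by_cases h1 : x = n
  · subst h1
    simp only [if_pos rfl, if_neg (by omega : ¬ x < x), if_true]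
    rw [Ty.asub_weaken]
  · simp only [if_neg h1]
    by_cases h2 : x < n
    · simp only [if_pos h2, if_neg (by omega : ¬ n < x), Ty.asub]
    · simp only [if_neg h2, if_pos (by omega : n < x), Ty.asub]

theorem Kd.midsub (K : Kd) (n : ℕ) (B : Ty) (τ : Sb) :
    (K.subst n (B.weaken n)).asub τ = K.asub (mids n B τ) := by
  rw [Kd.subst_eq, Kd.asub_asub]
  congr 1
  funext x
  simp only [sbs, mids]
  by_cases h1 : x = n
  · subst h1
    simp only [if_pos rfl, if_neg (by omega : ¬ x < x), if_true]
    rw [Ty.asub_weaken]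
  · simp only [if_neg h1]
    by_cases h2 : x < n
    · simp only [if_pos h2, if_neg (by omega : ¬ n < x), Ty.asub]
    · simp only [if_neg h2, if_pos (by omega : n < x), Ty.asub]

theorem Kd.mid_entry_lt {D : Kd} {x n : ℕ} (h : x < n) (B : Ty) (τ : Sb) :
    (D.weaken (x+1)).asub (mids n B τ) =
    ((D.subst (n-1-x) (B.weaken (n-1-x))).weaken (x+1)).asub τ := by
  rw [Kd.asub_weaken, Kd.asub_weaken, Kd.subst_eq, Kd.asub_asub]
  congr 1
  funext i
  simp only [mids, sbs]
  by_cases h1 : i = n - 1 - x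
  · subst h1
    simp only [if_pos rfl, if_true]
    rw [if_neg (by omega : ¬ (n-1-x) + (x+1) < n), if_pos (by omega : (n-1-x) + (x+1) = n)]
    rw [Ty.asub_weaken]
    congr 1
    funext j
    congr 1
    omega
  · simp only [if_neg h1]
    by_cases h2 : i < n - 1 - x
    · rw [if_neg (by omega : ¬ (n-1-x) < i), if_pos (by omega : i + (x+1) < n)]
      rfl
    · rw [if_pos (by omega : (n-1-x) < i), if_neg (by omega : ¬ i + (x+1) < n),
        if_neg (by omega : ¬ i + (x+1) = n)]
      show τ (i + (x+1) - 1) = τ (i - 1 + (x + 1))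
      congr 1
      omega

theorem Kd.mid_entry_eq (J : Kd) (n : ℕ) (B : Ty) (τ : Sb) :
    (J.weaken (n+1)).asub (mids n B τ) = J.asub (fun i => τ (i + n)) := by
  rw [Kd.asub_weaken]
  congr 1
  funext i
  show (if i + (n+1) < n then τ (i + (n+1)) else if i + (n+1) = n then
    B.asub (fun j => τ (j + n)) else τ (i + (n+1) - 1)) = τ (i + n)
  rw [if_neg (by omega : ¬ i + (n+1) < n), if_neg (by omega : ¬ i + (n+1) = n)]
  congr 1

theorem Kd.mid_entry_gt {K : Kd} {x n : ℕ} (h : n < x) (B : Ty) (τ : Sb) :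
    (K.weaken (x+1)).asub (mids n B τ) = (K.weaken x).asub τ := by
  rw [Kd.asub_weaken, Kd.asub_weaken]
  congr 1
  funext i
  show (if i + (x+1) < n then τ (i + (x+1)) else if i + (x+1) = n then
    B.asub (fun j => τ (j + n)) else τ (i + (x+1) - 1)) = τ (i + x)
  rw [if_neg (by omega : ¬ i + (x+1) < n), if_neg (by omega : ¬ i + (x+1) = n)]
  congr 1

theorem EqSub.mid {τ₁ τ₂ : Sb} {Δ : Ctx} {J : Kd} {E Γ' : Ctx} {B : Ty}
    (h : EqSub τ₁ τ₂ (sPfx B Δ ++ E) Γ') (hB : GTy E B J) (hJ : GKd E J) :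
    EqSub (mids Δ.length B τ₁) (mids Δ.length B τ₂) (Δ ++ .ty J :: E) Γ' := by
  have hd := h.drop
  simp only [sPfx_length] at hd
  refine ⟨h.1, fun x K hx => ?_⟩
  rcases Nat.lt_trichotomy x Δ.length with hc | hc | hc
  · rw [List.getElem?_append_left hc] at hx
    have hx' : (sPfx B Δ ++ E)[x]? = some (.ty (K.subst (Δ.length - 1 - x)
        (B.weaken (Δ.length - 1 - x)))) := by
      rw [List.getElem?_append_left (by simpa using hc), sPfx_get hc, hx]
      simp [OBind.substB]
      rw [show Δ.length - x - 1 = Δ.length - 1 - x from by omega]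
    obtain ⟨k1, k2, k3, s1, s2, w1, w2, d1, d2⟩ := h.2 x _ hx'
    have e : ∀ τ : Sb, (K.weaken (x+1)).asub (mids Δ.length B τ) =
        ((K.subst (Δ.length - 1 - x) (B.weaken (Δ.length - 1 - x))).weaken (x+1)).asub τ :=
      fun τ => Kd.mid_entry_lt hc B τ
    have et : ∀ τ : Sb, mids Δ.length B τ x = τ x := fun τ => by
      simp only [mids, if_pos hc]
    rw [e, e, et, et]
    exact ⟨k1, k2, k3, s1, s2, w1, w2, d1, d2⟩
  · subst hc
    rw [List.getElem?_append_right (by omega)] at hx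
    simp only [Nat.sub_self, List.getElem?_cons_zero, Option.some_inj] at hx
    injection hx with hx
    subst hx
    obtain ⟨k1, k2, k3, s1, s2⟩ := hB Γ' _ _ hd
    obtain ⟨w1, w2, d1, d2⟩ := hJ.kdf Γ' _ _ hd
    have e : ∀ τ : Sb, (J.weaken (Δ.length+1)).asub (mids Δ.length B τ) =
        J.asub (fun i => τ (i + Δ.length)) :=
      fun τ => Kd.mid_entry_eq J Δ.length B τ
    have et : ∀ τ : Sb, mids Δ.length B τ Δ.length = B.asub (fun i => τ (i + Δ.length)) :=
      fun τ => by
        simp only [mids, if_neg (by omega : ¬ Δ.length < Δ.length), if_pos rfl, if_true]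
    rw [e, e, et, et]
    exact ⟨k1, k2, k3, s1, s2, w1, w2, d1, d2⟩
  · rw [List.getElem?_append_right (by omega)] at hx
    rw [show x - Δ.length = (x - Δ.length - 1) + 1 from by omega] at hx
    simp only [List.getElem?_cons_succ] at hx
    have hx' : (sPfx B Δ ++ E)[x - 1]? = some (.ty K) := by
      rw [List.getElem?_append_right (by simp; omega)]
      simp only [sPfx_length]
      rw [show x - 1 - Δ.length = x - Δ.length - 1 from by omega]
      exact hx
    obtain ⟨k1, k2, k3, s1, s2, w1, w2, d1, d2⟩ := h.2 (x-1) _ hx'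
    have e : ∀ τ : Sb, (K.weaken (x+1)).asub (mids Δ.length B τ) = (K.weaken x).asub τ :=
      fun τ => Kd.mid_entry_gt hc B τ
    have ex : x - 1 + 1 = x := by omega
    rw [ex] at k1 k2 k3 s1 s2 w1 w2 d1 d2
    have et : ∀ τ : Sb, mids Δ.length B τ x = τ (x - 1) := fun τ => by
      simp only [mids, if_neg (by omega : ¬ x < Δ.length), if_neg (by omega : ¬ x = Δ.length)]
    rw [e, e, et, et]
    exact ⟨k1, k2, k3, s1, s2, w1, w2, d1, d2⟩

theorem GTy.subst {Δ : Ctx} {J E A K B} (h : GTy (Δ ++ .ty J :: E) A K)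
    (hB : GTy E B J) (hJ : GKd E J) :
    GTy (sPfx B Δ ++ E) (A.subst Δ.length (B.weaken Δ.length))
      (K.subst Δ.length (B.weaken Δ.length)) := by
  intro Γ' τ₁ τ₂ hτ
  have := h Γ' _ _ (hτ.mid hB hJ)
  rw [Ty.midsub, Ty.midsub, Kd.midsub, Kd.midsub]
  exact this

theorem GKd.subst : ∀ {K : Kd} {Δ : Ctx} {J E B}, GKd (Δ ++ .ty J :: E) K →
    GTy E B J → GKd E J →
    GKd (sPfx B Δ ++ E) (K.subst Δ.length (B.weaken Δ.length))
  | .intv a c, Δ, J, E, B, h, hB, hJ => by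
      simp only [Kd.subst]
      show KdF _ _
      intro Γ' τ₁ τ₂ hτ
      have h1 := h Γ' _ _ (hτ.mid hB hJ)
      have e : ∀ τ : Sb, (Kd.intv (a.subst Δ.length (B.weaken Δ.length))
          (c.subst Δ.length (B.weaken Δ.length))).asub τ
          = (Kd.intv a c).asub (mids Δ.length B τ) := by
        intro τ
        show Kd.intv _ _ = Kd.intv _ _
        rw [Ty.midsub, Ty.midsub]
      rw [e, e]
      exact h1
  | .pi j k, Δ, J, E, B, h, hB, hJ => by
      simp only [Kd.subst]
      refine ⟨?_, ?_, ?_⟩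
      · intro Γ' τ₁ τ₂ hτ
        have h1 := h.1 Γ' _ _ (hτ.mid hB hJ)
        have e : ∀ τ : Sb, (Kd.pi (j.subst Δ.length (B.weaken Δ.length))
            (k.subst (Δ.length + 1) ((B.weaken Δ.length).shift 0))).asub τ
            = (Kd.pi j k).asub (mids Δ.length B τ) := by
          intro τ
          rw [show (Kd.pi (j.subst Δ.length (B.weaken Δ.length))
            (k.subst (Δ.length + 1) ((B.weaken Δ.length).shift 0))) =
            (Kd.pi j k).subst Δ.length (B.weaken Δ.length) from rfl, Kd.midsub]
        rw [e, e]
        exact h1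
      · exact GKd.subst h.2.1 hB hJ
      · have := GKd.subst (K := k) (Δ := .ty j :: Δ) h.2.2 hB hJ
        rw [show (B.weaken Δ.length).shift 0 = B.weaken (Δ.length + 1) from
          (Ty.weaken_succ B Δ.length).symm]
        simpa [sPfx, OBind.substB] using this

/-- Substitution of the good predicates at the head variable. -/
theorem GTy.subst0 {J E A K B} (h : GTy (.ty J :: E) A K)
    (hB : GTy E B J) (hJ : GKd E J) :
    GTy E (A.subst 0 B) (K.subst 0 B) := by
  have := GTy.subst (Δ := []) h hB hJ
  simpa [sPfx, Ty.weaken_zero] using this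

theorem GKd.subst0 {K J E B} (h : GKd (.ty J :: E) K)
    (hB : GTy E B J) (hJ : GKd E J) :
    GKd E (K.subst 0 B) := by
  have := GKd.subst (Δ := []) h hB hJ
  simpa [sPfx, Ty.weaken_zero] using this

/-! ### Good-level helper lemmas -/

theorem GTy.star_of {E A B C} (h : GTy E A (.intv B C)) (hk : GKd E (.intv B C)) :
    GTy E A Kd.star := by
  intro Γ' σ₁ σ₂ hs
  obtain ⟨k1, k2, k3, s1, s2⟩ := h Γ' σ₁ σ₂ hs
  obtain ⟨w1, w2, _, _⟩ := hk Γ' σ₁ σ₂ hs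
  exact ⟨kinding_star k1 w1, kinding_star k2 w2, kinding_star k3 w1,
    subty_star s1 k1 k3, subty_star s2 k3 k1⟩

theorem GTy.top_good (E : Ctx) : GTy E .top Kd.star := by
  intro Γ' σ₁ σ₂ hs
  have k := Kinding.top hs.wf
  exact ⟨k, k, k, SubTy.refl k, SubTy.refl k⟩

theorem GTy.bot_good (E : Ctx) : GTy E .bot Kd.star := by
  intro Γ' σ₁ σ₂ hs
  have k := Kinding.bot hs.wf
  exact ⟨k, k, k, SubTy.refl k, SubTy.refl k⟩

theorem GTy.var0 {E : Ctx} {J : Kd} : GTy (.ty J :: E) (.var 0) (J.weaken 1) := by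
  intro Γ' σ₁ σ₂ hs
  obtain ⟨k1, k2, k3, s1, s2, _, _, _, _⟩ := hs.2 0 J (by simp)
  exact ⟨k1, k2, k3, s1, s2⟩

theorem GKd.mk_pi {E : Ctx} {J K : Kd} (gJ : GKd E J) (gK : GKd (.ty J :: E) K) :
    GKd E (.pi J K) := by
  refine ⟨?_, gJ, gK⟩
  intro Γ' σ₁ σ₂ h
  obtain ⟨wJ1, wJ2, dJ1, dJ2⟩ := gJ.kdf _ _ _ h
  have l11 := (h.left).lift wJ1 (subKd_refl wJ1) (subKd_refl wJ1) wJ1 wJ1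
    (subKd_refl wJ1) (subKd_refl wJ1)
  have l22 := (h.right).lift wJ2 (subKd_refl wJ2) (subKd_refl wJ2) wJ2 wJ2
    (subKd_refl wJ2) (subKd_refl wJ2)
  have l12a := h.lift wJ1 (subKd_refl wJ1) dJ1 wJ1 wJ2 dJ1 dJ2
  have l12b := h.lift wJ2 dJ2 (subKd_refl wJ2) wJ1 wJ2 dJ1 dJ2
  have wK11 := (gK.kdf _ _ _ l11).1
  have wK22 := (gK.kdf _ _ _ l22).1
  have w1 : KdWf Γ' ((Kd.pi J K).asub σ₁) := KdWf.pi wJ1 wK11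
  have w2 : KdWf Γ' ((Kd.pi J K).asub σ₂) := KdWf.pi wJ2 wK22
  refine ⟨w1, w2, ?_, ?_⟩
  · exact SubKd.pi w1 dJ2 (gK.kdf _ _ _ l12b).2.2.1
  · exact SubKd.pi w2 dJ1 (gK.kdf _ _ _ l12a).2.2.2

theorem GKd.intv_of {E A B} (gA : GTy E A Kd.star) (gB : GTy E B Kd.star) :
    GKd E (.intv A B) := by
  show KdF _ _
  intro Γ' σ₁ σ₂ h
  obtain ⟨ka1, ka2, ka3, sa1, sa2⟩ := gA Γ' σ₁ σ₂ h
  obtain ⟨kb1, kb2, kb3, sb1, sb2⟩ := gB Γ' σ₁ σ₂ h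
  exact ⟨KdWf.intv ka1 kb1, KdWf.intv ka2 kb2, SubKd.intv sa2 sb1, SubKd.intv sa1 sb2⟩

theorem GKd.intv_bounds {E B C} (h : GKd E (.intv B C)) :
    GTy E B Kd.star ∧ GTy E C Kd.star := by
  constructor
  · intro Γ' σ₁ σ₂ hs
    obtain ⟨w1, w2, d1, d2⟩ := h Γ' σ₁ σ₂ hs
    obtain ⟨kb1, kc1⟩ := w1.intv_inv
    obtain ⟨kb2, kc2⟩ := w2.intv_inv
    obtain ⟨s1, _⟩ := d2.intv_inv
    obtain ⟨s2, _⟩ := d1.intv_inv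
    exact ⟨kb1, kb2, kb2, s1, s2⟩
  · intro Γ' σ₁ σ₂ hs
    obtain ⟨w1, w2, d1, d2⟩ := h Γ' σ₁ σ₂ hs
    obtain ⟨kb1, kc1⟩ := w1.intv_inv
    obtain ⟨kb2, kc2⟩ := w2.intv_inv
    obtain ⟨_, s1⟩ := d1.intv_inv
    obtain ⟨_, s2⟩ := d2.intv_inv
    exact ⟨kc1, kc2, kc2, s1, s2⟩

theorem GTy.sub_conv {E A J K} (gA : GTy E A J)
    (hd : ∀ Γ' σ₁ σ₂, EqSub σ₁ σ₂ E Γ' → SubKd Γ' (J.asub σ₁) (K.asub σ₁)) :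
    GTy E A K := by
  intro Γ' σ₁ σ₂ h
  obtain ⟨k1, k2, k3, s1, s2⟩ := gA Γ' σ₁ σ₂ h
  have d1 := hd Γ' σ₁ σ₂ h
  have d2 := hd Γ' σ₂ σ₂ h.right
  exact ⟨Kinding.sub k1 d1, Kinding.sub k2 d2, Kinding.sub k3 d1,
    SubTy.sub s1 d1, SubTy.sub s2 d1⟩

theorem GTy.app_good {E A J K B} (gA : GTy E A (.pi J K)) (gP : GKd E (.pi J K))
    (gB : GTy E B J) : GTy E (.app A B) (K.subst 0 B) ∧ GKd E (K.subst 0 B) := by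
  obtain ⟨gPf, gJ, gK⟩ := gP
  refine ⟨?_, gK.subst0 gB gJ⟩
  intro Γ' σ₁ σ₂ h
  obtain ⟨ka1, ka2, ka3, sa1, sa2⟩ := gA Γ' σ₁ σ₂ h
  obtain ⟨kb1, kb2, kb3, sb1, sb2⟩ := gB Γ' σ₁ σ₂ h
  obtain ⟨wJ1, wJ2, dJ1, dJ2⟩ := gJ.kdf _ _ _ h
  have cswap := (h.left).cons kb3 kb1 kb1 sb2 sb1 wJ1 wJ1 (subKd_refl wJ1) (subKd_refl wJ1)
  have dswap := (gK.kdf _ _ _ cswap).2.2.1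
  have e1 : (K.subst 0 B).asub σ₁ = K.asub (scons (B.asub σ₁) σ₁) := Kd.subst0_asub K B σ₁
  have e2 : (K.subst 0 B).asub σ₂ = K.asub (scons (B.asub σ₂) σ₂) := Kd.subst0_asub K B σ₂
  rw [e1, e2]
  have k1 : Kinding Γ' ((Ty.app A B).asub σ₁) (K.asub (scons (B.asub σ₁) σ₁)) := by
    have := Kinding.app ka1 kb1
    rwa [Kd.lift_subst0] at this
  have k2 : Kinding Γ' ((Ty.app A B).asub σ₂) (K.asub (scons (B.asub σ₂) σ₂)) := by
    have := Kinding.app ka2 kb2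
    rwa [Kd.lift_subst0] at this
  have k3 : Kinding Γ' ((Ty.app A B).asub σ₂) (K.asub (scons (B.asub σ₁) σ₁)) := by
    have := Kinding.app ka3 kb3
    rw [Kd.lift_subst0] at this
    exact Kinding.sub this dswap
  have s1 : SubTy Γ' ((Ty.app A B).asub σ₁) ((Ty.app A B).asub σ₂)
      (K.asub (scons (B.asub σ₁) σ₁)) := by
    have := SubTy.app sa1 (TyEq.antisym sb1 sb2)
    rwa [Kd.lift_subst0] at this
  have s2 : SubTy Γ' ((Ty.app A B).asub σ₂) ((Ty.app A B).asub σ₁)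
      (K.asub (scons (B.asub σ₁) σ₁)) := by
    have := SubTy.app sa2 (TyEq.antisym sb2 sb1)
    rw [Kd.lift_subst0] at this
    exact SubTy.sub this dswap
  exact ⟨k1, k2, k3, s1, s2⟩

theorem GTy.lam_good {E J K A} (gJ : GKd E J) (gA : GTy (.ty J :: E) A K)
    (gK : GKd (.ty J :: E) K) : GTy E (.lam J A) (.pi J K) ∧ GKd E (.pi J K) := by
  refine ⟨?_, GKd.mk_pi gJ gK⟩
  intro Γ' σ₁ σ₂ h
  obtain ⟨wJ1, wJ2, dJ1, dJ2⟩ := gJ.kdf _ _ _ h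
  have l11 := (h.left).lift wJ1 (subKd_refl wJ1) (subKd_refl wJ1) wJ1 wJ1
    (subKd_refl wJ1) (subKd_refl wJ1)
  have l22 := (h.right).lift wJ2 (subKd_refl wJ2) (subKd_refl wJ2) wJ2 wJ2
    (subKd_refl wJ2) (subKd_refl wJ2)
  have l12a := h.lift wJ1 (subKd_refl wJ1) dJ1 wJ1 wJ2 dJ1 dJ2
  have l12b := h.lift wJ2 dJ2 (subKd_refl wJ2) wJ1 wJ2 dJ1 dJ2
  have l11b := (h.left).lift wJ2 dJ2 dJ2 wJ1 wJ1 (subKd_refl wJ1) (subKd_refl wJ1)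
  obtain ⟨ga1, _, _, gs1, gs2⟩ := gA _ _ _ l12a
  obtain ⟨_, ga2, _, _, _⟩ := gA _ _ _ l22
  obtain ⟨_, _, ga3, _, _⟩ := gA _ _ _ l12b
  have c1 : Kinding Γ' ((Ty.lam J A).asub σ₁) ((Kd.pi J K).asub σ₁) := Kinding.abs wJ1 ga1
  have c2 : Kinding Γ' ((Ty.lam J A).asub σ₂) ((Kd.pi J K).asub σ₂) := Kinding.abs wJ2 ga2
  have wK12b : KdWf (.ty (J.asub σ₂) :: Γ') (K.asub (Sb.lift σ₁)) := (gK.kdf _ _ _ l11b).1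
  have refl11 : SubKd (.ty (J.asub σ₁) :: Γ') (K.asub (Sb.lift σ₁)) (K.asub (Sb.lift σ₁)) :=
    (gK.kdf _ _ _ l11).2.2.1
  have c3 : Kinding Γ' ((Ty.lam J A).asub σ₂) ((Kd.pi J K).asub σ₁) := by
    have base : Kinding Γ' (.lam (J.asub σ₂) (A.asub (Sb.lift σ₂)))
        (.pi (J.asub σ₂) (K.asub (Sb.lift σ₁))) := Kinding.abs wJ2 ga3
    refine Kinding.sub base (SubKd.pi (KdWf.pi wJ2 wK12b) dJ1 refl11)
  exact ⟨c1, c2, c3, SubTy.abs c1 c3 gs1, SubTy.abs c3 c1 gs2⟩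

theorem GTy.all_good {E K A} (gK : GKd E K) (gA : GTy (.ty K :: E) A Kd.star) :
    GTy E (.all K A) Kd.star := by
  intro Γ' σ₁ σ₂ h
  obtain ⟨wK1, wK2, dK1, dK2⟩ := gK.kdf _ _ _ h
  have l22 := (h.right).lift wK2 (subKd_refl wK2) (subKd_refl wK2) wK2 wK2
    (subKd_refl wK2) (subKd_refl wK2)
  have l12a := h.lift wK1 (subKd_refl wK1) dK1 wK1 wK2 dK1 dK2
  have l12b := h.lift wK2 dK2 (subKd_refl wK2) wK1 wK2 dK1 dK2
  obtain ⟨ga1, _, _, gs1a, gs2a⟩ := gA _ _ _ l12a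
  obtain ⟨_, ga2, _, _, _⟩ := gA _ _ _ l22
  obtain ⟨_, _, _, gs1b, _⟩ := gA _ _ _ l12b
  have c1 : Kinding Γ' ((Ty.all K A).asub σ₁) Kd.star := Kinding.all wK1 ga1
  have c2 : Kinding Γ' ((Ty.all K A).asub σ₂) Kd.star := Kinding.all wK2 ga2
  exact ⟨c1, c2, c2, SubTy.all c1 dK2 gs1b, SubTy.all c2 dK1 gs2a⟩

theorem GTy.sing_good {E A B C} (gA : GTy E A (.intv B C)) (gI : GKd E (.intv B C)) :
    GTy E A (.intv A A) ∧ GKd E (.intv A A) := by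
  have gAs := gA.star_of gI
  constructor
  · intro Γ' σ₁ σ₂ h
    obtain ⟨k1, k2, k3, s1, s2⟩ := gA Γ' σ₁ σ₂ h
    obtain ⟨ks1, ks2, ks3, ss1, ss2⟩ := gAs Γ' σ₁ σ₂ h
    have c1 : Kinding Γ' (A.asub σ₁) ((Kd.intv A A).asub σ₁) := Kinding.sing k1
    have c2 : Kinding Γ' (A.asub σ₂) ((Kd.intv A A).asub σ₂) := Kinding.sing k2
    have c3 : Kinding Γ' (A.asub σ₂) ((Kd.intv A A).asub σ₁) :=
      Kinding.sub (Kinding.sing k3) (SubKd.intv ss1 ss2)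
    have t1 : SubTy Γ' (A.asub σ₁) (A.asub σ₂) ((Kd.intv A A).asub σ₁) :=
      SubTy.sub (SubTy.intv s1) (SubKd.intv (SubTy.refl ks1) ss2)
    have t2 : SubTy Γ' (A.asub σ₂) (A.asub σ₁) ((Kd.intv A A).asub σ₁) :=
      SubTy.sub (SubTy.intv s2) (SubKd.intv ss1 (SubTy.refl ks1))
    exact ⟨c1, c2, c3, t1, t2⟩
  · exact GKd.intv_of gAs gAs

theorem GTy.arr_good {E A B} (gA : GTy E A Kd.star) (gB : GTy E B Kd.star) :
    GTy E (.arr A B) Kd.star := by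
  intro Γ' σ₁ σ₂ h
  obtain ⟨ka1, ka2, ka3, sa1, sa2⟩ := gA Γ' σ₁ σ₂ h
  obtain ⟨kb1, kb2, kb3, sb1, sb2⟩ := gB Γ' σ₁ σ₂ h
  exact ⟨Kinding.arr ka1 kb1, Kinding.arr ka2 kb2, Kinding.arr ka3 kb3,
    SubTy.arr sa2 sb1, SubTy.arr sa1 sb2⟩

theorem Ty.shift0_lift (A : Ty) (σ : Sb) :
    (A.shift 0).asub (Sb.lift σ) = (A.asub σ).shift 0 := by
  rw [Ty.shift0_rn, Ty.shift0_rn, Ty.rn_asub, Ty.asub_rn]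
  congr 1

/-! ### The grand induction: substitution, functionality and validity combined -/

theorem grand :
    (∀ {E}, CtxWf E →
      CtxWf E ∧ ∀ (x : ℕ) (K : Kd), E[x]? = some (.ty K) → GKd E (K.weaken (x+1))) ∧
    (∀ {E K}, KdWf E K → CtxWf E ∧ GKd E K) ∧
    (∀ {E A K}, Kinding E A K → CtxWf E ∧ GTy E A K ∧ GKd E K) ∧
    (∀ {E} {t : Tm} {A}, Typing E t A → True) ∧
    (∀ {E J K}, SubKd E J K → CtxWf E ∧
      (∀ Γ' σ₁ σ₂, EqSub σ₁ σ₂ E Γ' → SubKd Γ' (J.asub σ₁) (K.asub σ₁)) ∧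
      GKd E J ∧ GKd E K) ∧
    (∀ {E A B K}, SubTy E A B K → CtxWf E ∧
      (∀ Γ' σ₁ σ₂, EqSub σ₁ σ₂ E Γ' → SubTy Γ' (A.asub σ₁) (B.asub σ₁) (K.asub σ₁)) ∧
      GTy E A K ∧ GTy E B K ∧ GKd E K) ∧
    (∀ {E J K}, KdEq E J K → CtxWf E ∧
      (∀ Γ' σ₁ σ₂, EqSub σ₁ σ₂ E Γ' → KdEq Γ' (J.asub σ₁) (K.asub σ₁)) ∧
      GKd E J ∧ GKd E K) ∧
    (∀ {E A B K}, TyEq E A B K → CtxWf E ∧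
      (∀ Γ' σ₁ σ₂, EqSub σ₁ σ₂ E Γ' → TyEq Γ' (A.asub σ₁) (B.asub σ₁) (K.asub σ₁)) ∧
      GTy E A K ∧ GTy E B K ∧ GKd E K) := by
  refine allRec ?nil ?cty ?ctm ?kintv ?kpi ?kvar ?ktop ?kbot ?karr ?kabs ?ksing ?kall ?kapp
    ?ksub ?tvar ?tabs ?tapp ?ttabs ?ttapp ?tsub ?skintv ?skpi ?strefl ?sttrans ?sttop ?stbot
    ?stbeta1 ?stbeta2 ?steta1 ?steta2 ?starr ?stabs ?stall ?stapp ?stbnd1 ?stbnd2 ?stintv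
    ?stsub ?keanti ?teanti
  case nil =>
    exact ⟨CtxWf.nil, fun x K h => by simp at h⟩
  case cty =>
    intro Γ K hw hK ih1 ih2
    refine ⟨CtxWf.ty hw hK, fun x K' hx => ?_⟩
    cases x with
    | zero =>
        simp only [List.getElem?_cons_zero, Option.some_inj] at hx
        injection hx with hx
        subst hx
        rw [Kd.weaken_one]
        exact ih2.2.weaken1 _
    | succ x =>
        simp only [List.getElem?_cons_succ] at hx
        rw [Kd.weaken_succ]
        exact (ih1.2 x K' hx).weaken1 _
  case ctm =>
    intro Γ A hw hA ih1 ih2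
    refine ⟨CtxWf.tm hw hA, fun x K' hx => ?_⟩
    cases x with
    | zero => simp at hx
    | succ x =>
        simp only [List.getElem?_cons_succ] at hx
        rw [Kd.weaken_succ]
        exact (ih1.2 x K' hx).weaken1 _
  case kintv =>
    intro Γ A B h1 h2 ih1 ih2
    exact ⟨ih1.1, GKd.intv_of ih1.2.1 ih2.2.1⟩
  case kpi =>
    intro Γ J K h1 h2 ih1 ih2
    exact ⟨ih1.1, GKd.mk_pi ih1.2 ih2.2⟩
  case kvar =>
    intro Γ x K hw hget ih
    refine ⟨ih.1, ?_, ih.2 x K hget⟩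
    intro Γ' σ₁ σ₂ h
    obtain ⟨k1, k2, k3, s1, s2, _, _, _, _⟩ := h.2 x K hget
    exact ⟨k1, k2, k3, s1, s2⟩
  case ktop =>
    intro Γ hw ih
    exact ⟨hw, GTy.top_good Γ, GKd.star Γ⟩
  case kbot =>
    intro Γ hw ih
    exact ⟨hw, GTy.bot_good Γ, GKd.star Γ⟩
  case karr =>
    intro Γ A B h1 h2 ih1 ih2
    exact ⟨ih1.1, GTy.arr_good ih1.2.1 ih2.2.1, GKd.star Γ⟩
  case kabs =>
    intro Γ J A K h1 h2 ih1 ih2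
    have r := GTy.lam_good ih1.2 ih2.2.1 ih2.2.2
    exact ⟨ih1.1, r.1, r.2⟩
  case ksing =>
    intro Γ A B C h ih
    have r := GTy.sing_good ih.2.1 ih.2.2
    exact ⟨ih.1, r.1, r.2⟩
  case kall =>
    intro Γ K A h1 h2 ih1 ih2
    exact ⟨ih1.1, GTy.all_good ih1.2 ih2.2.1, GKd.star Γ⟩
  case kapp =>
    intro Γ A J K B h1 h2 ih1 ih2
    have r := GTy.app_good ih1.2.1 ih1.2.2 ih2.2.1
    exact ⟨ih1.1, r.1, r.2⟩
  case ksub =>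
    intro Γ A J K h1 h2 ih1 ih2
    exact ⟨ih1.1, GTy.sub_conv ih1.2.1 ih2.2.1, ih2.2.2.2⟩
  case tvar => intros; trivial
  case tabs => intros; trivial
  case tapp => intros; trivial
  case ttabs => intros; trivial
  case ttapp => intros; trivial
  case tsub => intros; trivial
  case skintv =>
    intro Γ A2 A1 B1 B2 h1 h2 ih1 ih2
    refine ⟨ih1.1, ?_, GKd.intv_of ih1.2.2.2.1 ih2.2.2.1, GKd.intv_of ih1.2.2.1 ih2.2.2.2.1⟩
    intro Γ' σ₁ σ₂ h
    exact SubKd.intv (ih1.2.1 Γ' σ₁ σ₂ h) (ih2.2.1 Γ' σ₁ σ₂ h)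
  case skpi =>
    intro Γ J1 K1 J2 K2 h1 h2 h3 ih1 ih2 ih3
    refine ⟨ih1.1, ?_, ih1.2, GKd.mk_pi ih2.2.2.1 ih3.2.2.2⟩
    intro Γ' σ₁ σ₂ h
    have w1 := (ih1.2.kdf _ _ _ h).1
    obtain ⟨wJ1, wJ2, dJ1, dJ2⟩ := ih2.2.2.1.kdf _ _ _ h
    have l := (h.left).lift wJ1 (subKd_refl wJ1) (subKd_refl wJ1) wJ1 wJ1
      (subKd_refl wJ1) (subKd_refl wJ1)
    exact SubKd.pi w1 (ih2.2.1 Γ' σ₁ σ₂ h) (ih3.2.1 _ _ _ l)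
  case strefl =>
    intro Γ A K h ih
    exact ⟨ih.1, fun Γ' σ₁ σ₂ hs => SubTy.refl ((ih.2.1 Γ' σ₁ σ₂ hs).1), ih.2.1, ih.2.1, ih.2.2⟩
  case sttrans =>
    intro Γ A B K C h1 h2 ih1 ih2
    exact ⟨ih1.1, fun Γ' σ₁ σ₂ hs => SubTy.trans (ih1.2.1 Γ' σ₁ σ₂ hs) (ih2.2.1 Γ' σ₁ σ₂ hs),
      ih1.2.2.1, ih2.2.2.2.1, ih1.2.2.2.2⟩
  case sttop =>
    intro Γ A B C h ih
    exact ⟨ih.1, fun Γ' σ₁ σ₂ hs => SubTy.top ((ih.2.1 Γ' σ₁ σ₂ hs).1),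
      ih.2.1.star_of ih.2.2, GTy.top_good Γ, GKd.star Γ⟩
  case stbot =>
    intro Γ A B C h ih
    exact ⟨ih.1, fun Γ' σ₁ σ₂ hs => SubTy.bot ((ih.2.1 Γ' σ₁ σ₂ hs).1),
      GTy.bot_good Γ, ih.2.1.star_of ih.2.2, GKd.star Γ⟩
  case stbeta1 =>
    intro J Γ A K B h1 h2 ih1 ih2
    obtain ⟨hwΓ, gB, gJ⟩ := ih2
    have gA := ih1.2.1
    have gK := ih1.2.2
    have lam := GTy.lam_good gJ gA gK
    have app := GTy.app_good lam.1 lam.2 gB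
    refine ⟨hwΓ, ?_, app.1, gA.subst0 gB gJ, app.2⟩
    intro Γ' σ₁ σ₂ h
    obtain ⟨wJ1, _, _, _⟩ := gJ.kdf _ _ _ h
    have l := (h.left).lift wJ1 (subKd_refl wJ1) (subKd_refl wJ1) wJ1 wJ1
      (subKd_refl wJ1) (subKd_refl wJ1)
    have a1 := (gA _ _ _ l).1
    have b1 := (gB _ _ _ h).1
    have hb := SubTy.beta₁ a1 b1
    rw [Ty.lift_subst0, Kd.lift_subst0] at hb
    rw [Ty.subst0_asub, Kd.subst0_asub]
    exact hb
  case stbeta2 =>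
    intro J Γ A K B h1 h2 ih1 ih2
    obtain ⟨hwΓ, gB, gJ⟩ := ih2
    have gA := ih1.2.1
    have gK := ih1.2.2
    have lam := GTy.lam_good gJ gA gK
    have app := GTy.app_good lam.1 lam.2 gB
    refine ⟨hwΓ, ?_, gA.subst0 gB gJ, app.1, app.2⟩
    intro Γ' σ₁ σ₂ h
    obtain ⟨wJ1, _, _, _⟩ := gJ.kdf _ _ _ h
    have l := (h.left).lift wJ1 (subKd_refl wJ1) (subKd_refl wJ1) wJ1 wJ1
      (subKd_refl wJ1) (subKd_refl wJ1)
    have a1 := (gA _ _ _ l).1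
    have b1 := (gB _ _ _ h).1
    have hb := SubTy.beta₂ a1 b1
    rw [Ty.lift_subst0, Kd.lift_subst0] at hb
    rw [Ty.subst0_asub, Kd.subst0_asub]
    exact hb
  case steta1 =>
    intro Γ A J K h ih
    obtain ⟨hwΓ, gA, gP⟩ := ih
    have gJ : GKd Γ J := gP.2.1
    have gK : GKd (.ty J :: Γ) K := gP.2.2
    have gA' : GTy (.ty J :: Γ) (A.shift 0) ((Kd.pi J K).shift 0) := gA.weaken1 _
    have gP' : GKd (.ty J :: Γ) ((Kd.pi J K).shift 0) := GKd.weaken1 gP _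
    have gv : GTy (.ty J :: Γ) (.var 0) (J.shift 0) := by
      rw [← Kd.weaken_one]; exact GTy.var0
    have happ := GTy.app_good gA' gP' gv
    rw [Kd.eta_subst] at happ
    have lam := GTy.lam_good gJ happ.1 gK
    refine ⟨hwΓ, ?_, lam.1, gA, gP⟩
    intro Γ' σ₁ σ₂ hs
    have a1 := (gA _ _ _ hs).1
    have he := SubTy.eta₁ a1
    show SubTy Γ' (.lam (J.asub σ₁) (.app ((A.shift 0).asub (Sb.lift σ₁)) (.var 0)))
      (A.asub σ₁) ((Kd.pi J K).asub σ₁)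
    rw [Ty.shift0_lift]
    exact he
  case steta2 =>
    intro Γ A J K h ih
    obtain ⟨hwΓ, gA, gP⟩ := ih
    have gJ : GKd Γ J := gP.2.1
    have gK : GKd (.ty J :: Γ) K := gP.2.2
    have gA' : GTy (.ty J :: Γ) (A.shift 0) ((Kd.pi J K).shift 0) := gA.weaken1 _
    have gP' : GKd (.ty J :: Γ) ((Kd.pi J K).shift 0) := GKd.weaken1 gP _
    have gv : GTy (.ty J :: Γ) (.var 0) (J.shift 0) := by
      rw [← Kd.weaken_one]; exact GTy.var0
    have happ := GTy.app_good gA' gP' gv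
    rw [Kd.eta_subst] at happ
    have lam := GTy.lam_good gJ happ.1 gK
    refine ⟨hwΓ, ?_, gA, lam.1, gP⟩
    intro Γ' σ₁ σ₂ hs
    have a1 := (gA _ _ _ hs).1
    have he := SubTy.eta₂ a1
    show SubTy Γ' (A.asub σ₁) (.lam (J.asub σ₁) (.app ((A.shift 0).asub (Sb.lift σ₁)) (.var 0)))
      ((Kd.pi J K).asub σ₁)
    rw [Ty.shift0_lift]
    exact he
  case starr =>
    intro Γ A2 A1 B1 B2 h1 h2 ih1 ih2
    exact ⟨ih1.1, fun Γ' σ₁ σ₂ hs => SubTy.arr (ih1.2.1 Γ' σ₁ σ₂ hs) (ih2.2.1 Γ' σ₁ σ₂ hs),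
      GTy.arr_good ih1.2.2.2.1 ih2.2.2.1, GTy.arr_good ih1.2.2.1 ih2.2.2.2.1, GKd.star Γ⟩
  case stabs =>
    intro Γ J1 A1 J K J2 A2 h1 h2 h3 ih1 ih2 ih3
    obtain ⟨gPf, gJ, gK⟩ := ih1.2.2
    refine ⟨ih1.1, ?_, ih1.2.1, ih2.2.1, ih1.2.2⟩
    intro Γ' σ₁ σ₂ hs
    obtain ⟨wJ1, _, _, _⟩ := gJ.kdf _ _ _ hs
    have l := (hs.left).lift wJ1 (subKd_refl wJ1) (subKd_refl wJ1) wJ1 wJ1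
      (subKd_refl wJ1) (subKd_refl wJ1)
    exact SubTy.abs ((ih1.2.1 _ _ _ hs).1) ((ih2.2.1 _ _ _ hs).1) (ih3.2.1 _ _ _ l)
  case stall =>
    intro Γ K1 A1 K2 A2 h1 h2 h3 ih1 ih2 ih3
    refine ⟨ih1.1, ?_, ih1.2.1, GTy.all_good ih2.2.2.1 ih3.2.2.2.1, GKd.star Γ⟩
    intro Γ' σ₁ σ₂ hs
    obtain ⟨wK1, _, _, _⟩ := ih2.2.2.1.kdf _ _ _ hs
    have l := (hs.left).lift wK1 (subKd_refl wK1) (subKd_refl wK1) wK1 wK1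
      (subKd_refl wK1) (subKd_refl wK1)
    exact SubTy.all ((ih1.2.1 _ _ _ hs).1) (ih2.2.1 _ _ _ hs) (ih3.2.1 _ _ _ l)
  case stapp =>
    intro Γ A1 A2 J K B1 B2 h1 h2 ih1 ih2
    obtain ⟨gPf, gJ, gK⟩ := ih1.2.2.2.2
    have ga1 := ih1.2.2.1
    have ga2 := ih1.2.2.2.1
    have gb1 := ih2.2.2.1
    have gb2 := ih2.2.2.2.1
    have appl := GTy.app_good ga1 ih1.2.2.2.2 gb1
    have appr := GTy.app_good ga2 ih1.2.2.2.2 gb2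
    have hd : ∀ Γ' σ₁ σ₂, EqSub σ₁ σ₂ Γ Γ' →
        SubKd Γ' ((K.subst 0 B2).asub σ₁) ((K.subst 0 B1).asub σ₁) := by
      intro Γ' σ₁ σ₂ hs
      rw [Kd.subst0_asub, Kd.subst0_asub]
      obtain ⟨wJ1, _, _, _⟩ := gJ.kdf _ _ _ hs
      have te := ih2.2.1 _ _ _ hs.left
      rcases te with ⟨t1, t2⟩
      have kb1 := (gb1 _ _ _ hs.left).1
      have kb2 := (gb2 _ _ _ hs.left).1
      have cons := (hs.left).cons kb2 kb1 kb1 t2 t1 wJ1 wJ1 (subKd_refl wJ1) (subKd_refl wJ1)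
      exact (gK.kdf _ _ _ cons).2.2.1
    refine ⟨ih1.1, ?_, appl.1, appr.1.sub_conv hd, appl.2⟩
    intro Γ' σ₁ σ₂ hs
    have ha := SubTy.app (ih1.2.1 _ _ _ hs) (ih2.2.1 _ _ _ hs)
    rw [Kd.lift_subst0] at ha
    rw [Kd.subst0_asub]
    exact ha
  case stbnd1 =>
    intro Γ A B1 B2 h ih
    exact ⟨ih.1, fun Γ' σ₁ σ₂ hs => SubTy.bnd₁ ((ih.2.1 Γ' σ₁ σ₂ hs).1),
      (ih.2.2.intv_bounds).1, ih.2.1.star_of ih.2.2, GKd.star Γ⟩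
  case stbnd2 =>
    intro Γ A B1 B2 h ih
    exact ⟨ih.1, fun Γ' σ₁ σ₂ hs => SubTy.bnd₂ ((ih.2.1 Γ' σ₁ σ₂ hs).1),
      ih.2.1.star_of ih.2.2, (ih.2.2.intv_bounds).2, GKd.star Γ⟩
  case stintv =>
    intro Γ A1 A2 B C h ih
    have g1 := ih.2.2.1
    have g2 := ih.2.2.2.1
    have gI := ih.2.2.2.2
    have g1s := g1.star_of gI
    have g2s := g2.star_of gI
    refine ⟨ih.1, fun Γ' σ₁ σ₂ hs => SubTy.intv (ih.2.1 Γ' σ₁ σ₂ hs), ?_, ?_,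
      GKd.intv_of g1s g2s⟩
    · intro Γ' σ₁ σ₂ hs
      obtain ⟨k1, k2, k3, s1, s2⟩ := g1 Γ' σ₁ σ₂ hs
      obtain ⟨m1, m2, m3, u1, u2⟩ := g2 Γ' σ₁ σ₂ hs
      obtain ⟨q1, q2, q3, v1, v2⟩ := g1s Γ' σ₁ σ₂ hs
      obtain ⟨r1, r2, r3, w1, w2⟩ := g2s Γ' σ₁ σ₂ hs
      have st1 : SubTy Γ' (A1.asub σ₁) (A2.asub σ₁) Kd.star :=
        subty_star (ih.2.1 Γ' σ₁ σ₂ hs) k1 m1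
      have st2 : SubTy Γ' (A1.asub σ₂) (A2.asub σ₂) Kd.star :=
        subty_star (ih.2.1 Γ' σ₂ σ₂ hs.right) k2 m2
      exact ⟨Kinding.sub (Kinding.sing k1) (SubKd.intv (SubTy.refl q1) st1),
        Kinding.sub (Kinding.sing k2) (SubKd.intv (SubTy.refl q2) st2),
        Kinding.sub (Kinding.sing k3) (SubKd.intv v1 (SubTy.trans v2 st1)),
        SubTy.sub (SubTy.intv s1) (SubKd.intv (SubTy.refl q1) (SubTy.trans v2 st1)),
        SubTy.sub (SubTy.intv s2) (SubKd.intv v1 st1)⟩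
    · intro Γ' σ₁ σ₂ hs
      obtain ⟨k1, k2, k3, s1, s2⟩ := g1 Γ' σ₁ σ₂ hs
      obtain ⟨m1, m2, m3, u1, u2⟩ := g2 Γ' σ₁ σ₂ hs
      obtain ⟨q1, q2, q3, v1, v2⟩ := g1s Γ' σ₁ σ₂ hs
      obtain ⟨r1, r2, r3, w1, w2⟩ := g2s Γ' σ₁ σ₂ hs
      have st1 : SubTy Γ' (A1.asub σ₁) (A2.asub σ₁) Kd.star :=
        subty_star (ih.2.1 Γ' σ₁ σ₂ hs) k1 m1
      have st2 : SubTy Γ' (A1.asub σ₂) (A2.asub σ₂) Kd.star :=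
        subty_star (ih.2.1 Γ' σ₂ σ₂ hs.right) k2 m2
      exact ⟨Kinding.sub (Kinding.sing m1) (SubKd.intv st1 (SubTy.refl r1)),
        Kinding.sub (Kinding.sing m2) (SubKd.intv st2 (SubTy.refl r2)),
        Kinding.sub (Kinding.sing m3) (SubKd.intv (SubTy.trans st1 w1) w2),
        SubTy.sub (SubTy.intv u1) (SubKd.intv st1 w2),
        SubTy.sub (SubTy.intv u2) (SubKd.intv (SubTy.trans st1 w1) (SubTy.refl r1))⟩
  case stsub =>
    intro Γ A1 A2 J K h1 h2 ih1 ih2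
    exact ⟨ih1.1, fun Γ' σ₁ σ₂ hs => SubTy.sub (ih1.2.1 Γ' σ₁ σ₂ hs) (ih2.2.1 Γ' σ₁ σ₂ hs),
      ih1.2.2.1.sub_conv ih2.2.1, ih1.2.2.2.1.sub_conv ih2.2.1, ih2.2.2.2⟩
  case keanti =>
    intro Γ J K h1 h2 ih1 ih2
    exact ⟨ih1.1, fun Γ' σ₁ σ₂ hs => KdEq.antisym (ih1.2.1 Γ' σ₁ σ₂ hs) (ih2.2.1 Γ' σ₁ σ₂ hs),
      ih1.2.2.1, ih1.2.2.2⟩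
  case teanti =>
    intro Γ A B K h1 h2 ih1 ih2
    exact ⟨ih1.1, fun Γ' σ₁ σ₂ hs => TyEq.antisym (ih1.2.1 Γ' σ₁ σ₂ hs) (ih2.2.1 Γ' σ₁ σ₂ hs),
      ih1.2.2.1, ih1.2.2.2.1, ih1.2.2.2.2⟩

/-! ### Extraction of validity -/

theorem kinding_valid {Γ A K} (h : Kinding Γ A K) : KdWf Γ K := by
  obtain ⟨hw, _, gK⟩ := grand.2.2.1 h
  have := (gK.kdf Γ _ _ (EqSub.id hw)).1
  rwa [Kd.asub_var] at this

theorem subkd_valid {Γ J K} (h : SubKd Γ J K) : KdWf Γ J ∧ KdWf Γ K := by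
  obtain ⟨hw, _, gJ, gK⟩ := grand.2.2.2.2.1 h
  have h1 := (gJ.kdf Γ _ _ (EqSub.id hw)).1
  have h2 := (gK.kdf Γ _ _ (EqSub.id hw)).1
  rw [Kd.asub_var] at h1 h2
  exact ⟨h1, h2⟩

theorem kdeq_valid {Γ J K} (h : KdEq Γ J K) : KdWf Γ J ∧ KdWf Γ K := by
  obtain ⟨hw, _, gJ, gK⟩ := grand.2.2.2.2.2.2.1 h
  have h1 := (gJ.kdf Γ _ _ (EqSub.id hw)).1
  have h2 := (gK.kdf Γ _ _ (EqSub.id hw)).1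
  rw [Kd.asub_var] at h1 h2
  exact ⟨h1, h2⟩

theorem subty_valid {Γ A B K} (h : SubTy Γ A B K) : Kinding Γ A K ∧ Kinding Γ B K := by
  obtain ⟨hw, _, gA, gB, _⟩ := grand.2.2.2.2.2.1 h
  have h1 := (gA Γ _ _ (EqSub.id hw)).1
  have h2 := (gB Γ _ _ (EqSub.id hw)).1
  rw [Ty.asub_var, Kd.asub_var] at h1 h2
  exact ⟨h1, h2⟩

theorem tyeq_valid {Γ A B K} (h : TyEq Γ A B K) : Kinding Γ A K ∧ Kinding Γ B K := by
  obtain ⟨hw, _, gA, gB, _⟩ := grand.2.2.2.2.2.2.2 h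
  have h1 := (gA Γ _ _ (EqSub.id hw)).1
  have h2 := (gB Γ _ _ (EqSub.id hw)).1
  rw [Ty.asub_var, Kd.asub_var] at h1 h2
  exact ⟨h1, h2⟩

theorem Ty.subst0_scons (A B : Ty) : A.subst 0 B = A.asub (scons B Ty.var) := by
  have := Ty.subst0_asub A B Ty.var
  rwa [Ty.asub_var, Ty.asub_var] at this

theorem typing_valid :
    (∀ {E}, CtxWf E → True) ∧ (∀ {E K}, KdWf E K → True) ∧
    (∀ {E A K}, Kinding E A K → True) ∧
    (∀ {E} {t : Tm} {A}, Typing E t A → Kinding E A Kd.star) ∧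
    (∀ {E J K}, SubKd E J K → True) ∧ (∀ {E A B K}, SubTy E A B K → True) ∧
    (∀ {E J K}, KdEq E J K → True) ∧ (∀ {E A B K}, TyEq E A B K → True) := by
  refine allRec ?nil ?cty ?ctm ?kintv ?kpi ?kvar ?ktop ?kbot ?karr ?kabs ?ksing ?kall ?kapp
    ?ksub ?tvar ?tabs ?tapp ?ttabs ?ttapp ?tsub ?skintv ?skpi ?strefl ?sttrans ?sttop ?stbot
    ?stbeta1 ?stbeta2 ?steta1 ?steta2 ?starr ?stabs ?stall ?stapp ?stbnd1 ?stbnd2 ?stintv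
    ?stsub ?keanti ?teanti
  case tvar =>
    intro Γ x A hw hget _
    exact lookup_wf_tm hw hget
  case tabs =>
    intro Γ A B t h1 h2 h3 _ _ _
    exact Kinding.arr h1 h2
  case tapp =>
    intro Γ s A B t h1 h2 ih1 ih2
    exact (kinding_arr_inv ih1).2
  case ttabs =>
    intro Γ K t A h1 h2 _ ih
    exact Kinding.all h1 ih
  case ttapp =>
    intro Γ t K A B h1 h2 ih1 ih2
    obtain ⟨wK, kA⟩ := kinding_all_inv ih1
    have g := (grand.2.2.1 kA).2.1
    have wfΓ : CtxWf Γ := (grand.2.2.1 h2).1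
    have kB : Kinding Γ B (K.asub Ty.var) := by rwa [Kd.asub_var]
    have wK' : KdWf Γ (K.asub Ty.var) := by rwa [Kd.asub_var]
    have es := (EqSub.id wfΓ).cons kB kB kB (SubTy.refl kB) (SubTy.refl kB)
      wK' wK' (subKd_refl wK') (subKd_refl wK')
    have res := (g Γ _ _ es).1
    rw [Ty.subst0_scons]
    exact res
  case tsub =>
    intro Γ t A B h1 h2 ih1 _
    exact (subty_valid h2).2
  all_goals intros <;> trivial
/-- **Validity of the declarative judgments**: (1) kinding validity, (2) typing
validity, (3) kind (in)equation validity, (4) type (in)equation validity. -/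
theorem validity :
    (∀ (Γ : Ctx) (A : Ty) (K : Kd), Kinding Γ A K → KdWf Γ K) ∧
    (∀ (Γ : Ctx) (t : Tm) (A : Ty), Typing Γ t A → Kinding Γ A Kd.star) ∧
    (∀ (Γ : Ctx) (J K : Kd), SubKd Γ J K ∨ KdEq Γ J K → KdWf Γ J ∧ KdWf Γ K) ∧
    (∀ (Γ : Ctx) (A B : Ty) (K : Kd), SubTy Γ A B K ∨ TyEq Γ A B K →
      Kinding Γ A K ∧ Kinding Γ B K) := by
  refine ⟨fun Γ A K h => kinding_valid h, fun Γ t A h => typing_valid.2.2.2.1 h,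
    fun Γ J K h => ?_, fun Γ A B K h => ?_⟩
  · rcases h with h | h
    · exact subkd_valid h
    · exact kdeq_valid h
  · rcases h with h | h
    · exact subty_valid h
    · exact tyeq_valid h
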